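/- arXiv:1403.6242 — 5 statements merged into one kernel-verified Lean document; each statement's English description precedes it below -/
import Mathlib

section
/- There is a universal constant c>0 with the following property. Let H,L>0, j∈{1,2}, u∈M, α∈(0,1), ε>0, and write E_j = E_j^ε[u,Ω]. For any λ∈(0,min{L,H}] there exist s∈[0,H−λ] and s'∈[0,L−λ], with stripes S = (0,L)×(s,s+λ) ⊂ Ω and S' = (s',s'+λ)×(0,H) ⊂ Ω, such that: E_j^ε[u,S] ≤ c(λ/H)E_j, E_j^ε[u,S'] ≤ c(λ/L)E_j, E_j^ε[u,S∩S'] ≤ c(λ²/(LH))E_j, and ‖∂₁u₂‖_{L¹(S∩S')} ≤ c(λ²/(LH))‖∂₁u₂‖_{L¹(Ω)}. -/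
/-!
Formalization framework for "Energy scaling and branched microstructures in a
model for shape-memory alloys with SO(2) invariance" (Chan–Conti).

Deformations are maps `u : ℝ² → ℝ²` (with `ℝ²` the Euclidean plane).  The
gradient `Du` is the 2×2 matrix of partial derivatives, matrices carry the
Frobenius norm, and the total variation `|D²u|(ω)` of the (matrix-valued)
gradient is defined by duality against C¹ compactly supported test fields.
The admissible class consists of (Lipschitz) deformations whose gradient has
bounded variation and which agree with the identity on `∂Ω`.
-/

open MeasureTheory Set Metric Topology

noncomputable section

attribute [local instance] Matrix.frobeniusNormedAddCommGroup

abbrev M2 : Type := Matrix (Fin 2) (Fin 2) ℝ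
abbrev E2 : Type := EuclideanSpace ℝ (Fin 2)

/-- Coercion from plain functions to `E2`. -/
def toE2 (f : Fin 2 → ℝ) : E2 := WithLp.toLp 2 f

/-- The matrix `F` applied to the point `x ∈ ℝ²`. -/
def mulV (F : M2) (x : E2) : E2 := toE2 (F.mulVec (fun i => x i))

/-- The group `SO(2)` of 2×2 proper rotations. -/
def SO2 : Set M2 := {R | R * R.transpose = 1 ∧ R.det = 1}

/-- The set `K₁ = SO(2)A₁ ∪ SO(2)B₁`, with `A₁ = [[1,-α],[0,1]]`, `B₁ = [[1,α],[0,1]]`. -/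
def K1 (α : ℝ) : Set M2 :=
  ((fun R => R * !![1, -α; 0, 1]) '' SO2) ∪ ((fun R => R * !![1, α; 0, 1]) '' SO2)

/-- The set `K₂ = SO(2)A₂ ∪ SO(2)B₂`, with `A₂ = diag(1,1-α)`, `B₂ = diag(1,1+α)`. -/
def K2 (α : ℝ) : Set M2 :=
  ((fun R => R * !![1, 0; 0, 1 - α]) '' SO2) ∪ ((fun R => R * !![1, 0; 0, 1 + α]) '' SO2)

/-- `K_j` for `j ∈ {1,2}`. -/
def Kj (j : ℕ) (α : ℝ) : Set M2 := if j = 1 then K1 α else K2 α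

/-- Distance (w.r.t. the Frobenius norm) of a matrix to a set of matrices. -/
def distK (K : Set M2) (F : M2) : ℝ := Metric.infDist F K

/-- The gradient `Du(x)` as a 2×2 matrix, `(Du)_{ij} = ∂_j u_i`. -/
def Dmat (u : E2 → E2) (x : E2) : M2 :=
  Matrix.of fun i j => fderiv ℝ u x (EuclideanSpace.single j 1) i

/-- Divergence of a vector field on `ℝ²`. -/
def divg (ψ : E2 → E2) (x : E2) : ℝ := ∑ k, fderiv ℝ ψ x (EuclideanSpace.single k 1) k

/-- The set of numbers `∫_ω G : div φ` over admissible test fields `φ`; the total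
variation `|DG|(ω)` is its supremum, and `G ∈ BV(ω)` iff this set is bounded above. -/
def tvSet (G : E2 → M2) (ω : Set E2) : Set ℝ :=
  { r | ∃ φ : Fin 2 → Fin 2 → (E2 → E2),
      (∀ i j, ContDiff ℝ 1 (φ i j)) ∧
      (∀ i j, HasCompactSupport (φ i j)) ∧
      (∀ i j, ∀ x : E2, x ∉ ω → φ i j x = 0) ∧
      (∀ x : E2, ∑ i, ∑ j, ‖φ i j x‖ ^ 2 ≤ 1) ∧
      r = ∫ x in ω, ∑ i, ∑ j, G x i j * divg (φ i j) x }

/-- Total variation `|DG|(ω)` of a matrix field `G` over `ω`. -/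
def tv (G : E2 → M2) (ω : Set E2) : ℝ := sSup (tvSet G ω)

/-- The energy `E^ε[u,ω] = ∫_ω dist²(Du,K) dx + ε |D²u|(ω)`. -/
def energy (K : Set M2) (ε : ℝ) (u : E2 → E2) (ω : Set E2) : ℝ :=
  (∫ x in ω, distK K (Dmat u x) ^ 2) + ε * tv (Dmat u) ω

/-- The open rectangle `(x₀, x₀+ℓ) × (y₀, y₀+h)`. -/
def rect (x₀ ℓ y₀ h : ℝ) : Set E2 := {x | x 0 ∈ Ioo x₀ (x₀ + ℓ) ∧ x 1 ∈ Ioo y₀ (y₀ + h)}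

/-- The domain `Ω = (0,L) × (0,H)`. -/
def Omg (L H : ℝ) : Set E2 := rect 0 L 0 H

/-- The admissible class `M`: deformations (Lipschitz, so in particular `W^{1,2}`)
whose gradient has bounded variation on `Ω` and which coincide with the identity
on `∂Ω`. -/
def Adm (Ω : Set E2) : Set (E2 → E2) :=
  {u | (∃ C : NNReal, LipschitzWith C u) ∧ BddAbove (tvSet (Dmat u) Ω) ∧
       ∀ x ∈ frontier Ω, u x = x}

/-- The 1-periodic zigzag function `Z(t) = dist(t+1/4, ℤ) - 1/4`. -/
def Zfun (t : ℝ) : ℝ := |t + 1/4 - (round (t + 1/4) : ℝ)| - 1/4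

/-- Rescaled zigzag `Z_h(t) = h Z(t/h)`. -/
def Zh (h t : ℝ) : ℝ := h * Zfun (t / h)

set_option maxHeartbeats 1000000

-- ===== Auxiliary lemmas =====

lemma contE (i : Fin 2) : Continuous fun x : E2 => x i := (continuous_apply i).comp (PiLp.continuous_ofLp 2 _)

lemma rect_open (a ℓ b h : ℝ) : IsOpen (rect a ℓ b h) :=
  ((isOpen_Ioo.preimage (contE 0)).inter (isOpen_Ioo.preimage (contE 1)))

lemma rect_meas (a ℓ b h : ℝ) : MeasurableSet (rect a ℓ b h) := (rect_open a ℓ b h).measurableSet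

lemma rect_bounded (a ℓ b h : ℝ) : Bornology.IsBounded (rect a ℓ b h) := by
  rw [Metric.isBounded_iff_subset_closedBall 0]
  refine ⟨|a| + |ℓ| + |b| + |h|, fun x hx => ?_⟩
  obtain ⟨⟨h1, h2⟩, h3, h4⟩ := hx
  have e0 : |x 0| ≤ |a| + |ℓ| := by
    rw [abs_le]; constructor <;> [skip; skip] <;>
      cases' abs_cases a with ha ha <;> cases' abs_cases ℓ with hl hl <;> nlinarith
  have e1 : |x 1| ≤ |b| + |h| := by
    rw [abs_le]; constructor <;> [skip; skip] <;>
      cases' abs_cases b with ha ha <;> cases' abs_cases h with hl hl <;> nlinarith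
  have hn : ‖x‖ ≤ |x 0| + |x 1| := by
    rw [EuclideanSpace.norm_eq]
    rw [show (∑ i, ‖x i‖^2) = |x 0|^2 + |x 1|^2 by simp [Fin.sum_univ_two, sq_abs]]
    calc Real.sqrt (|x 0|^2 + |x 1|^2) ≤ Real.sqrt ((|x 0| + |x 1|)^2) :=
          Real.sqrt_le_sqrt (by nlinarith [abs_nonneg (x 0), abs_nonneg (x 1)])
      _ = |x 0| + |x 1| := Real.sqrt_sq (by positivity)
  simp only [Metric.mem_closedBall, dist_zero_right]
  linarith

lemma rect_vol_lt_top (a ℓ b h : ℝ) : volume (rect a ℓ b h) < ⊤ :=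
  (rect_bounded a ℓ b h).measure_lt_top

lemma hyperplane_null (i : Fin 2) (c : ℝ) : volume {x : E2 | x i = c} = 0 := by
  have h : {x : E2 | x i = c} =
      (AffineSubspace.comap ((EuclideanSpace.proj i : E2 →L[ℝ] ℝ) : E2 →ₗ[ℝ] ℝ).toAffineMap
        (AffineSubspace.mk' c (⊥ : Submodule ℝ ℝ)) : Set E2) := by
    ext x
    simp [AffineSubspace.mem_comap, AffineSubspace.mem_mk', sub_eq_zero]
  rw [h]
  apply Measure.addHaar_affineSubspace
  intro htop
  have h1 : (EuclideanSpace.single i (c+1) : E2) ∈ (⊤ : AffineSubspace ℝ E2) := trivial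
  rw [← htop] at h1
  simp [AffineSubspace.mem_comap, AffineSubspace.mem_mk', sub_eq_zero] at h1

lemma closure_rect_null (a ℓ b h : ℝ) :
    volume (closure (rect a ℓ b h) \ rect a ℓ b h) = 0 := by
  have hclosed : IsClosed {x : E2 | x 0 ∈ Icc a (a+ℓ) ∧ x 1 ∈ Icc b (b+h)} :=
    ((isClosed_Icc.preimage (contE 0)).inter (isClosed_Icc.preimage (contE 1)))
  have hsub : closure (rect a ℓ b h) ⊆ {x : E2 | x 0 ∈ Icc a (a+ℓ) ∧ x 1 ∈ Icc b (b+h)} :=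
    closure_minimal (fun x hx => ⟨⟨hx.1.1.le, hx.1.2.le⟩, hx.2.1.le, hx.2.2.le⟩) hclosed
  refine measure_mono_null (fun x hxx => ?_)
    (measure_union_null
      (measure_union_null (hyperplane_null 0 a) (hyperplane_null 0 (a+ℓ)))
      (measure_union_null (hyperplane_null 1 b) (hyperplane_null 1 (b+h))))
  obtain ⟨hc, hn⟩ := hxx
  obtain ⟨⟨h1, h2⟩, h3, h4⟩ := hsub hc
  by_cases e1 : x 0 = a
  · exact Or.inl (Or.inl e1)
  by_cases e2 : x 0 = a + ℓ
  · exact Or.inl (Or.inr e2)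
  by_cases e3 : x 1 = b
  · exact Or.inr (Or.inl e3)
  by_cases e4 : x 1 = b + h
  · exact Or.inr (Or.inr e4)
  exact absurd ⟨⟨lt_of_le_of_ne h1 (Ne.symm e1), lt_of_le_of_ne h2 e2⟩,
    lt_of_le_of_ne h3 (Ne.symm e3), lt_of_le_of_ne h4 e4⟩ hn

lemma divg_eq_zero_of_nmem_closure {ω : Set E2} {φ : E2 → E2}
    (h0 : ∀ x ∉ ω, φ x = 0) {x : E2} (hx : x ∉ closure ω) : divg φ x = 0 := by
  have hop : IsOpen (closure ω)ᶜ := isClosed_closure.isOpen_compl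
  have hev : φ =ᶠ[nhds x] (fun _ => (0:E2)) := by
    filter_upwards [hop.mem_nhds hx] with y hy
    exact h0 y fun hmem => hy (subset_closure hmem)
  have h := hev.fderiv_eq (𝕜 := ℝ)
  simp [divg, h]

lemma setIntegral_localize (F : E2 → ℝ) {ω Ω' : Set E2} (hΩ : MeasurableSet Ω')
    (hsub : ω ⊆ Ω') (hnull : volume (closure ω \ ω) = 0)
    (hF : ∀ x ∉ closure ω, F x = 0) :
    ∫ x in Ω', F x = ∫ x in ω, F x := by
  apply setIntegral_eq_of_subset_of_ae_diff_eq_zero hΩ.nullMeasurableSet hsub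
  have h1 : ∀ᵐ x : E2, x ∉ closure ω \ ω := by
    rw [ae_iff]; simp only [not_not]; exact hnull
  filter_upwards [h1] with x hx hmem
  by_cases h : x ∈ closure ω
  · exact absurd ⟨h, hmem.2⟩ hx
  · exact hF x h
lemma zero_mem_tvSet (G : E2 → M2) (ω : Set E2) : (0:ℝ) ∈ tvSet G ω := by
  refine ⟨fun _ _ _ => 0, fun i j => contDiff_const, fun i j => ?_,
    fun i j x _ => rfl, fun x => by simp, ?_⟩
  · rw [hasCompactSupport_def]; simp [tsupport]
  · simp [divg]

lemma integrand_zero {G : E2 → M2} {φ : Fin 2 → Fin 2 → E2 → E2} {ω : Set E2}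
    (h3 : ∀ i j, ∀ x, x ∉ ω → φ i j x = 0) {x : E2} (hx : x ∉ closure ω) :
    ∑ i, ∑ j, G x i j * divg (φ i j) x = 0 :=
  Finset.sum_eq_zero fun i _ => Finset.sum_eq_zero fun j _ => by
    rw [divg_eq_zero_of_nmem_closure (h3 i j) hx, mul_zero]

lemma tvSet_subset (G : E2 → M2) {ω Ω' : Set E2} (hΩ : MeasurableSet Ω')
    (hsub : ω ⊆ Ω') (hnull : volume (closure ω \ ω) = 0) :
    tvSet G ω ⊆ tvSet G Ω' := by
  rintro r ⟨φ, h1, h2, h3, h4, h5⟩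
  refine ⟨φ, h1, h2, fun i j x hx => h3 i j x (fun hm => hx (hsub hm)), h4, ?_⟩
  rw [h5]
  exact (setIntegral_localize _ hΩ hsub hnull (fun x hx => integrand_zero h3 hx)).symm

lemma sum_csSup_le {ι : Type} [DecidableEq ι] (s : Finset ι) (S : ι → Set ℝ) :
    ∀ T : ℝ, (∀ i ∈ s, (S i).Nonempty) →
    (∀ r : ι → ℝ, (∀ i ∈ s, r i ∈ S i) → ∑ i ∈ s, r i ≤ T) →
    ∑ i ∈ s, sSup (S i) ≤ T := by
  induction s using Finset.induction_on with
  | empty => intro T _ h; simpa using h (fun _ => 0) (by simp)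
  | @insert a s ha ih =>
    intro T hne h
    rw [Finset.sum_insert ha]
    have key : sSup (S a) ≤ T - ∑ i ∈ s, sSup (S i) := by
      apply csSup_le (hne a (Finset.mem_insert_self a s))
      intro r hr
      have h2 : ∑ i ∈ s, sSup (S i) ≤ T - r := by
        apply ih (T - r) (fun i hi => hne i (Finset.mem_insert_of_mem hi))
        intro sel hsel
        have h3 := h (fun i => if i = a then r else sel i) ?_
        · rw [Finset.sum_insert ha, if_pos rfl,
            show (∑ i ∈ s, (if i = a then r else sel i)) = ∑ i ∈ s, sel i from
              Finset.sum_congr rfl fun i hi => if_neg (by rintro rfl; exact ha hi)] at h3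
          linarith
        · intro i hi
          rcases Finset.mem_insert.mp hi with he | hi'
          · rw [he, if_pos rfl]; exact hr
          · rw [if_neg (by rintro rfl; exact ha hi')]; exact hsel i hi'
      linarith
    linarith

lemma hasCompactSupport_finsetSum {ι : Type} [DecidableEq ι] (s : Finset ι) (f : ι → E2 → E2)
    (h : ∀ i ∈ s, HasCompactSupport (f i)) :
    HasCompactSupport (fun x => ∑ i ∈ s, f i x) := by
  induction s using Finset.induction_on with
  | empty => rw [hasCompactSupport_def]; simp [tsupport]
  | @insert a s ha ih =>
    simp only [Finset.sum_insert ha]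
    exact (h a (Finset.mem_insert_self a s)).add
      (ih fun i hi => h i (Finset.mem_insert_of_mem hi))

lemma sum_apply_E2 {ι : Type} (s : Finset ι) (w : ι → E2) (k : Fin 2) :
    (∑ i ∈ s, w i) k = ∑ i ∈ s, w i k := by
  classical
  induction s using Finset.induction_on with
  | empty => simp
  | @insert a t ha ih =>
    rw [Finset.sum_insert ha, Finset.sum_insert ha, ← ih]
    rfl

lemma divg_finsetSum {ι : Type} (s : Finset ι) (f : ι → E2 → E2)
    (h : ∀ i ∈ s, ContDiff ℝ 1 (f i)) (x : E2) :
    divg (fun y => ∑ i ∈ s, f i y) x = ∑ i ∈ s, divg (f i) x := by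
  have hd : ∀ i ∈ s, DifferentiableAt ℝ (f i) x := fun i hi =>
    ((h i hi).differentiable one_ne_zero).differentiableAt
  have hf : fderiv ℝ (fun y => ∑ i ∈ s, f i y) x = ∑ i ∈ s, fderiv ℝ (f i) x := fderiv_fun_sum hd
  unfold divg
  rw [show (∑ k, (fderiv ℝ (fun y => ∑ i ∈ s, f i y) x) (EuclideanSpace.single k 1) k)
      = ∑ k, ∑ i ∈ s, (fderiv ℝ (f i) x) (EuclideanSpace.single k 1) k from
    Finset.sum_congr rfl fun k _ => by
      rw [hf, ContinuousLinearMap.sum_apply, sum_apply_E2]]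
  exact Finset.sum_comm

lemma continuous_divg {φ : E2 → E2} (h : ContDiff ℝ 1 φ) : Continuous (divg φ) := by
  unfold divg
  refine continuous_finset_sum _ fun k _ => ?_
  exact (contE k).comp
    (((ContinuousLinearMap.apply ℝ E2 (EuclideanSpace.single k 1)).continuous).comp
      (h.continuous_fderiv one_ne_zero))

lemma hasCompactSupport_divg {φ : E2 → E2} (hφ : HasCompactSupport φ) :
    HasCompactSupport (divg φ) := by
  have h1 := hφ.fderiv (𝕜 := ℝ)
  have h2 : divg φ = (fun L : E2 →L[ℝ] E2 => ∑ k, L (EuclideanSpace.single k 1) k) ∘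
      (fderiv ℝ φ) := rfl
  rw [h2]
  exact h1.comp_left (by simp)

lemma integrableOn_of_bound (F : E2 → ℝ) (ω : Set E2) (hmeas : Measurable F)
    (hfin : volume ω < ⊤) (M : ℝ) (hb : ∀ x, |F x| ≤ M) : IntegrableOn F ω volume := by
  refine Integrable.mono' (g := fun _ => M) ?_ hmeas.aestronglyMeasurable ?_
  · exact integrableOn_const hfin.ne
  · exact Filter.Eventually.of_forall fun x => by simpa using hb x

lemma sum_setIntegral_le {ι : Type} (s : Finset ι) (ω : ι → Set E2) (Ω' : Set E2)
    (hm : ∀ i ∈ s, MeasurableSet (ω i))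
    (hsub : ∀ i ∈ s, ω i ⊆ Ω') (hdisj : Set.Pairwise (↑s) (Function.onFun Disjoint ω))
    (F : E2 → ℝ) (hF0 : ∀ x, 0 ≤ F x)
    (hFi : IntegrableOn F Ω') :
    ∑ i ∈ s, ∫ x in ω i, F x ≤ ∫ x in Ω', F x := by
  rw [← integral_biUnion_finset s hm hdisj (fun i hi => hFi.mono_set (hsub i hi))]
  exact setIntegral_mono_set hFi (Filter.Eventually.of_forall fun x => hF0 x)
    (HasSubset.Subset.eventuallyLE (iUnion₂_subset hsub))
lemma tv_nonneg {G : E2 → M2} {ω : Set E2} (h : BddAbove (tvSet G ω)) : 0 ≤ tv G ω :=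
  le_csSup h (zero_mem_tvSet G ω)

lemma sum_mem_tvSet {ι : Type} [DecidableEq ι] (s : Finset ι) (ω : ι → Set E2) (Ω' : Set E2)
    (hΩ : MeasurableSet Ω') (hfin : volume Ω' < ⊤)
    (hsub : ∀ i ∈ s, ω i ⊆ Ω') (hnull : ∀ i ∈ s, volume (closure (ω i) \ ω i) = 0)
    (hdisj : Set.Pairwise (↑s) (Function.onFun Disjoint ω))
    (G : E2 → M2) (hGm : ∀ a b, Measurable fun x => G x a b) (C : ℝ)
    (hGb : ∀ x a b, |G x a b| ≤ C)
    (r : ι → ℝ) (hri : ∀ i ∈ s, r i ∈ tvSet G (ω i)) :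
    (∑ i ∈ s, r i) ∈ tvSet G Ω' := by
  classical
  have key : ∀ i : ι, ∃ φ : Fin 2 → Fin 2 → (E2 → E2),
      (∀ a b, ContDiff ℝ 1 (φ a b)) ∧ (∀ a b, HasCompactSupport (φ a b)) ∧
      (∀ a b, ∀ x : E2, x ∉ ω i → φ a b x = 0) ∧ (∀ x : E2, ∑ a, ∑ b, ‖φ a b x‖ ^ 2 ≤ 1) ∧
      (i ∈ s → r i = ∫ x in ω i, ∑ a, ∑ b, G x a b * divg (φ a b) x) := by
    intro i
    by_cases hi : i ∈ s
    · obtain ⟨φ, h1, h2, h3, h4, h5⟩ := hri i hi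
      exact ⟨φ, h1, h2, h3, h4, fun _ => h5⟩
    · exact ⟨fun _ _ _ => 0, fun a b => contDiff_const,
        fun a b => by rw [hasCompactSupport_def]; simp [tsupport],
        fun a b x _ => rfl, fun x => by simp, fun h => absurd h hi⟩
  choose φ hC hK hV hN hr using key
  refine ⟨fun a b x => ∑ i ∈ s, φ i a b x, ?_, ?_, ?_, ?_, ?_⟩
  · exact fun a b => ContDiff.sum fun i _ => hC i a b
  · exact fun a b => hasCompactSupport_finsetSum s _ fun i _ => hK i a b
  · intro a b x hx
    exact Finset.sum_eq_zero fun i hi => hV i a b x (fun hm => hx (hsub i hi hm))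
  · intro x
    by_cases hx : ∃ i ∈ s, x ∈ ω i
    · obtain ⟨i₀, hi₀, hxi₀⟩ := hx
      have e : ∀ a b, (∑ i ∈ s, φ i a b x) = φ i₀ a b x := by
        intro a b
        refine Finset.sum_eq_single_of_mem i₀ hi₀ fun i hi hne => ?_
        refine hV i a b x fun hm => ?_
        exact Set.disjoint_left.mp (hdisj hi hi₀ hne) hm hxi₀
      rw [show (∑ a, ∑ b, ‖∑ i ∈ s, φ i a b x‖ ^ 2) = ∑ a, ∑ b, ‖φ i₀ a b x‖ ^ 2 from
        Finset.sum_congr rfl fun a _ => Finset.sum_congr rfl fun b _ => by rw [e a b]]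
      exact hN i₀ x
    · push_neg at hx
      have e : ∀ a b, (∑ i ∈ s, φ i a b x) = 0 :=
        fun a b => Finset.sum_eq_zero fun i hi => hV i a b x (hx i hi)
      rw [show (∑ a, ∑ b, ‖∑ i ∈ s, φ i a b x‖ ^ 2) = ∑ a, ∑ b, (0:ℝ) from
        Finset.sum_congr rfl fun a _ => Finset.sum_congr rfl fun b _ => by rw [e a b]; simp]
      simp
  · -- the value
    have hint : ∀ i a b, IntegrableOn (fun x => G x a b * divg (φ i a b) x) Ω' := by
      intro i a b
      obtain ⟨M, hM⟩ := (hasCompactSupport_divg (hK i a b)).exists_bound_of_continuous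
        (continuous_divg (hC i a b))
      refine integrableOn_of_bound _ _ ((hGm a b).mul (continuous_divg (hC i a b)).measurable)
        hfin (C * M) fun x => ?_
      rw [abs_mul]
      have h1 : 0 ≤ |G x a b| := abs_nonneg _
      have h2 : |divg (φ i a b) x| ≤ M := by simpa using hM x
      have h3 : 0 ≤ |divg (φ i a b) x| := abs_nonneg _
      exact mul_le_mul (hGb x a b) h2 h3 (le_trans h1 (hGb x a b))
    have step1 : ∀ x : E2, (∑ a, ∑ b, G x a b * divg (fun y => ∑ i ∈ s, φ i a b y) x)
        = ∑ i ∈ s, ∑ a, ∑ b, G x a b * divg (φ i a b) x := by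
      intro x
      rw [show (∑ a, ∑ b, G x a b * divg (fun y => ∑ i ∈ s, φ i a b y) x)
          = ∑ a, ∑ b, ∑ i ∈ s, G x a b * divg (φ i a b) x from
        Finset.sum_congr rfl fun a _ => Finset.sum_congr rfl fun b _ => by
          rw [divg_finsetSum s _ (fun i _ => hC i a b) x, Finset.mul_sum]]
      rw [show (∑ a, ∑ b, ∑ i ∈ s, G x a b * divg (φ i a b) x)
          = ∑ a, ∑ i ∈ s, ∑ b, G x a b * divg (φ i a b) x from
        Finset.sum_congr rfl fun a _ => Finset.sum_comm]
      exact Finset.sum_comm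
    calc ∑ i ∈ s, r i = ∑ i ∈ s, ∫ x in ω i, ∑ a, ∑ b, G x a b * divg (φ i a b) x :=
          Finset.sum_congr rfl fun i hi => hr i hi
      _ = ∑ i ∈ s, ∫ x in Ω', ∑ a, ∑ b, G x a b * divg (φ i a b) x := by
          refine Finset.sum_congr rfl fun i hi => ?_
          exact (setIntegral_localize _ hΩ (hsub i hi) (hnull i hi)
            (fun x hx => integrand_zero (hV i) hx)).symm
      _ = ∫ x in Ω', ∑ i ∈ s, ∑ a, ∑ b, G x a b * divg (φ i a b) x := by
          rw [integral_finset_sum s]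
          intro i hi
          exact (integrable_finset_sum _ fun a _ =>
            integrable_finset_sum _ fun b _ => hint i a b)
      _ = ∫ x in Ω', ∑ a, ∑ b, G x a b * divg (fun y => ∑ i ∈ s, φ i a b y) x := by
          refine setIntegral_congr_fun hΩ fun x _ => ?_
          exact (step1 x).symm

lemma tv_superadd {ι : Type} [DecidableEq ι] (s : Finset ι) (ω : ι → Set E2) (Ω' : Set E2)
    (hΩ : MeasurableSet Ω') (hfin : volume Ω' < ⊤)
    (hsub : ∀ i ∈ s, ω i ⊆ Ω') (hnull : ∀ i ∈ s, volume (closure (ω i) \ ω i) = 0)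
    (hdisj : Set.Pairwise (↑s) (Function.onFun Disjoint ω))
    (G : E2 → M2) (hGm : ∀ a b, Measurable fun x => G x a b) (C : ℝ)
    (hGb : ∀ x a b, |G x a b| ≤ C)
    (hB : BddAbove (tvSet G Ω')) :
    ∑ i ∈ s, tv G (ω i) ≤ tv G Ω' := by
  apply sum_csSup_le s (fun i => tvSet G (ω i)) (tv G Ω')
    (fun i _ => ⟨0, zero_mem_tvSet G (ω i)⟩)
  intro r hri
  exact le_csSup hB (sum_mem_tvSet s ω Ω' hΩ hfin hsub hnull hdisj G hGm C hGb r hri)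
lemma Dmat_measurable (u : E2 → E2) (i j : Fin 2) : Measurable fun x => Dmat u x i j :=
  (measurable_pi_apply i).comp ((WithLp.measurable_ofLp 2 _).comp (measurable_fderiv_apply_const ℝ u _))

lemma abs_apply_le_norm (w : E2) (i : Fin 2) : |w i| ≤ ‖w‖ := by
  rw [EuclideanSpace.norm_eq]
  calc |w i| = Real.sqrt (‖w i‖^2) := by rw [Real.norm_eq_abs, Real.sqrt_sq_eq_abs, abs_abs]
    _ ≤ Real.sqrt (∑ j, ‖w j‖^2) := Real.sqrt_le_sqrt (Finset.single_le_sum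
          (f := fun j => ‖w j‖^2) (fun j _ => sq_nonneg _) (Finset.mem_univ i))

lemma Dmat_bound {u : E2 → E2} {C : NNReal} (hlip : LipschitzWith C u) (x : E2) (i j : Fin 2) :
    |Dmat u x i j| ≤ C := by
  have h1 : ‖fderiv ℝ u x‖ ≤ C := norm_fderiv_le_of_lipschitz ℝ hlip
  have h2 : ‖fderiv ℝ u x (EuclideanSpace.single j 1)‖ ≤
      ‖fderiv ℝ u x‖ * ‖(EuclideanSpace.single j 1 : E2)‖ := (fderiv ℝ u x).le_opNorm _
  rw [EuclideanSpace.norm_single, norm_one, mul_one] at h2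
  calc |Dmat u x i j| = |fderiv ℝ u x (EuclideanSpace.single j 1) i| := rfl
    _ ≤ ‖fderiv ℝ u x (EuclideanSpace.single j 1)‖ :=
        abs_apply_le_norm (fderiv ℝ u x (EuclideanSpace.single j 1)) i
    _ ≤ C := le_trans h2 h1

lemma frob_bound (B : M2) (c : ℝ) (hc : 0 ≤ c) (h : ∀ i j, |B i j| ≤ c) : ‖B‖ ≤ 2 * c := by
  rw [Matrix.frobenius_norm_def]
  have hsum : (∑ i, ∑ j, ‖B i j‖ ^ (2:ℝ)) ≤ (2*c)^(2:ℝ) := by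
    have hterm : ∀ i j : Fin 2, ‖B i j‖ ^ (2:ℝ) ≤ c^2 := by
      intro i j
      rw [Real.norm_eq_abs, show ((2:ℝ) = ((2:ℕ):ℝ)) by norm_num, Real.rpow_natCast]
      exact pow_le_pow_left₀ (abs_nonneg _) (h i j) 2
    calc (∑ i, ∑ j, ‖B i j‖ ^ (2:ℝ)) ≤ ∑ i : Fin 2, ∑ j : Fin 2, c^2 :=
          Finset.sum_le_sum fun i _ => Finset.sum_le_sum fun j _ => hterm i j
      _ = 4 * c^2 := by simp [Fin.sum_univ_two]; ring
      _ ≤ (2*c)^(2:ℝ) := by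
          rw [show ((2:ℝ) = ((2:ℕ):ℝ)) by norm_num, Real.rpow_natCast]
          push_cast
          nlinarith
  calc (∑ i, ∑ j, ‖B i j‖ ^ (2:ℝ)) ^ (1/2 : ℝ) ≤ ((2*c)^(2:ℝ)) ^ (1/2:ℝ) := by
        apply Real.rpow_le_rpow ?_ hsum (by norm_num)
        apply Finset.sum_nonneg fun i _ => Finset.sum_nonneg fun j _ =>
          Real.rpow_nonneg (norm_nonneg _) _
    _ = 2*c := by
        rw [← Real.rpow_mul (by positivity)]
        norm_num
lemma one_mem_SO2 : (1 : M2) ∈ SO2 := ⟨by simp, by simp⟩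

lemma distK_measurable (K : Set M2) (u : E2 → E2) :
    Measurable fun x => distK K (Dmat u x) := by
  have h1 : Measurable fun x : E2 => (fun i j => fderiv ℝ u x (EuclideanSpace.single j 1) i) :=
    measurable_pi_lambda _ fun i => measurable_pi_lambda _ fun j =>
      (measurable_pi_apply i).comp ((WithLp.measurable_ofLp 2 _).comp (measurable_fderiv_apply_const ℝ u _))
  have h2 : Continuous (fun v : Fin 2 → Fin 2 → ℝ => Metric.infDist (Matrix.of v : M2) K) :=
    (continuous_infDist_pt K).comp continuous_id
  exact h2.measurable.comp h1

lemma distK_bound {K : Set M2} {A : M2} (hA : A ∈ K) (ha : ∀ a b : Fin 2, |A a b| ≤ 2)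
    {u : E2 → E2} {C : NNReal} (hlip : LipschitzWith C u) (x : E2) :
    distK K (Dmat u x) ≤ 2*((C:ℝ) + 2) := by
  have h1 : distK K (Dmat u x) ≤ dist (Dmat u x) A := Metric.infDist_le_dist_of_mem hA
  have h2 : dist (Dmat u x) A = ‖Dmat u x - A‖ := dist_eq_norm _ _
  have h3 : ‖Dmat u x - A‖ ≤ 2*((C:ℝ)+2) := by
    apply frob_bound _ ((C:ℝ)+2) (by positivity)
    intro a b
    have e : (Dmat u x - A) a b = Dmat u x a b - A a b := rfl
    rw [e]
    calc |Dmat u x a b - A a b| ≤ |Dmat u x a b| + |A a b| := abs_sub _ _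
      _ ≤ (C:ℝ) + 2 := add_le_add (Dmat_bound hlip x a b) (ha a b)
  rw [h2] at h1
  linarith

lemma energy_superadd (K : Set M2) {ε : ℝ} (hε : 0 ≤ ε) (u : E2 → E2)
    {ι : Type} [DecidableEq ι] (s : Finset ι) (ω : ι → Set E2) (Ω' : Set E2)
    (hΩ : MeasurableSet Ω') (hfin : volume Ω' < ⊤)
    (hm : ∀ i ∈ s, MeasurableSet (ω i))
    (hsub : ∀ i ∈ s, ω i ⊆ Ω') (hnull : ∀ i ∈ s, volume (closure (ω i) \ ω i) = 0)
    (hdisj : Set.Pairwise (↑s) (Function.onFun Disjoint ω))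
    (C : ℝ) (hGb : ∀ (x : E2) (a b : Fin 2), |Dmat u x a b| ≤ C)
    (hfi : IntegrableOn (fun x => distK K (Dmat u x)^2) Ω')
    (hB : BddAbove (tvSet (Dmat u) Ω')) :
    ∑ i ∈ s, energy K ε u (ω i) ≤ energy K ε u Ω' := by
  unfold energy
  rw [Finset.sum_add_distrib]
  have h1 := sum_setIntegral_le s ω Ω' hm hsub hdisj _ (fun x => sq_nonneg _) hfi
  have h2 := tv_superadd s ω Ω' hΩ hfin hsub hnull hdisj _ (Dmat_measurable u) C hGb hB
  have h3 : ∑ i ∈ s, ε * tv (Dmat u) (ω i) = ε * ∑ i ∈ s, tv (Dmat u) (ω i) :=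
    (Finset.mul_sum _ _ _).symm
  rw [h3]
  exact add_le_add h1 (mul_le_mul_of_nonneg_left h2 hε)

lemma pigeonhole3 (N : ℕ) (hN : 0 < N) (a b c : ℕ → ℝ) (A B C : ℝ)
    (ha0 : ∀ k ∈ Finset.range N, 0 ≤ a k) (hb0 : ∀ k ∈ Finset.range N, 0 ≤ b k)
    (hc0 : ∀ k ∈ Finset.range N, 0 ≤ c k)
    (hsa : ∑ k ∈ Finset.range N, a k ≤ A) (hsb : ∑ k ∈ Finset.range N, b k ≤ B)
    (hsc : ∑ k ∈ Finset.range N, c k ≤ C) :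
    ∃ k ∈ Finset.range N, a k ≤ 4*A/N ∧ b k ≤ 4*B/N ∧ c k ≤ 4*C/N := by
  classical
  have key : ∀ (f : ℕ → ℝ) (T : ℝ), (∀ k ∈ Finset.range N, 0 ≤ f k) →
      (∑ k ∈ Finset.range N, f k ≤ T) →
      4 * ((Finset.range N).filter (fun k => ¬ f k ≤ 4*T/N)).card ≤ N := by
    intro f T h0 hs
    have hNpos : (0:ℝ) < N := by exact_mod_cast hN
    by_cases hT : 0 < T
    · set S := (Finset.range N).filter (fun k => ¬ f k ≤ 4*T/N) with hS
      have h1 : (S.card : ℝ) * (4*T/N) ≤ ∑ k ∈ S, f k := by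
        calc (S.card : ℝ) * (4*T/N) = ∑ _k ∈ S, 4*T/N := by
              rw [Finset.sum_const, nsmul_eq_mul]
          _ ≤ ∑ k ∈ S, f k := Finset.sum_le_sum fun k hk =>
              le_of_lt (lt_of_not_ge (Finset.mem_filter.mp hk).2)
      have h2 : ∑ k ∈ S, f k ≤ T :=
        le_trans (Finset.sum_le_sum_of_subset_of_nonneg (Finset.filter_subset _ _)
          (fun k hk _ => h0 k hk)) hs
      have h3 : (S.card : ℝ) * (4*T/N) ≤ T := le_trans h1 h2
      rw [mul_div_assoc'] at h3
      rw [div_le_iff₀ hNpos] at h3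
      have h4 : (4*S.card : ℝ) ≤ N := by nlinarith
      exact_mod_cast h4
    · have hT0 : T = 0 := le_antisymm (not_lt.mp hT)
        (le_trans (Finset.sum_nonneg h0) hs)
      subst hT0
      have hempty : (Finset.range N).filter (fun k => ¬ f k ≤ 4*0/N) = ∅ := by
        apply Finset.filter_eq_empty_iff.mpr
        intro k hk
        have h5 : f k ≤ 0 := le_trans (Finset.single_le_sum h0 hk) hs
        simp only [not_not]
        rw [show (4*0/(N:ℝ)) = 0 by ring]
        exact h5
      rw [hempty]
      simpa using Nat.zero_le N
  have kA := key a A ha0 hsa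
  have kB := key b B hb0 hsb
  have kC := key c C hc0 hsc
  by_contra hcon
  push_neg at hcon
  have hsubset : Finset.range N ⊆
      ((Finset.range N).filter (fun k => ¬ a k ≤ 4*A/N)) ∪
      (((Finset.range N).filter (fun k => ¬ b k ≤ 4*B/N)) ∪
       ((Finset.range N).filter (fun k => ¬ c k ≤ 4*C/N))) := by
    intro k hk
    by_cases h1 : a k ≤ 4*A/N
    · by_cases h2 : b k ≤ 4*B/N
      · have h3 := hcon k hk h1 h2
        exact Finset.mem_union_right _ (Finset.mem_union_right _
          (Finset.mem_filter.mpr ⟨hk, not_le.mpr h3⟩))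
      · exact Finset.mem_union_right _ (Finset.mem_union_left _ (Finset.mem_filter.mpr ⟨hk, h2⟩))
    · exact Finset.mem_union_left _ (Finset.mem_filter.mpr ⟨hk, h1⟩)
  have hcard := Finset.card_le_card hsubset
  rw [Finset.card_range] at hcard
  have h5 := Finset.card_union_le ((Finset.range N).filter (fun k => ¬ a k ≤ 4*A/N))
    (((Finset.range N).filter (fun k => ¬ b k ≤ 4*B/N)) ∪
     ((Finset.range N).filter (fun k => ¬ c k ≤ 4*C/N)))
  have h6 := Finset.card_union_le ((Finset.range N).filter (fun k => ¬ b k ≤ 4*B/N))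
    ((Finset.range N).filter (fun k => ¬ c k ≤ 4*C/N))
  omega

lemma floor_facts {lam H : ℝ} (h0 : 0 < lam) (hle : lam ≤ H) :
    1 ≤ ⌊H/lam⌋₊ ∧ (⌊H/lam⌋₊ : ℝ) * lam ≤ H ∧ H ≤ 2 * ⌊H/lam⌋₊ * lam := by
  have hH : 0 < H := lt_of_lt_of_le h0 hle
  have h1 : (1:ℝ) ≤ H / lam := (one_le_div h0).mpr hle
  have hN1 : 1 ≤ ⌊H/lam⌋₊ := Nat.le_floor (by exact_mod_cast h1)
  have h2 : (⌊H/lam⌋₊ : ℝ) ≤ H / lam := Nat.floor_le (by positivity)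
  have h3 : H / lam < ⌊H/lam⌋₊ + 1 := Nat.lt_floor_add_one _
  refine ⟨hN1, ?_, ?_⟩
  · calc (⌊H/lam⌋₊ : ℝ) * lam ≤ (H/lam) * lam := mul_le_mul_of_nonneg_right h2 h0.le
      _ = H := by field_simp
  · have h4 : H < (⌊H/lam⌋₊ + 1) * lam := by
      calc H = (H/lam) * lam := by field_simp
        _ < (⌊H/lam⌋₊ + 1) * lam := by
            apply mul_lt_mul_of_pos_right h3 h0
    have h5 : ((⌊H/lam⌋₊:ℝ) + 1) ≤ 2 * ⌊H/lam⌋₊ := by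
      have : (1:ℝ) ≤ ⌊H/lam⌋₊ := by exact_mod_cast hN1
      linarith
    nlinarith

lemma step_bound {N : ℕ} {lam H A v : ℝ} (hH : 0 < H) (hlam : 0 < lam)
    (hNl : H ≤ 2*N*lam) (hA : 0 ≤ A) (hv : 0 ≤ v) (h : v ≤ 4*A/N) (hN1 : 1 ≤ N) :
    v ≤ 8*(lam/H)*A := by
  have hN' : (0:ℝ) < N := by exact_mod_cast hN1
  have h' : v * N ≤ 4*A := (le_div_iff₀ hN').mp h
  have goal' : v * H ≤ 8*lam*A := by nlinarith
  rw [show 8*(lam/H)*A = 8*lam*A/H by ring, le_div_iff₀ hH]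
  exact goal'
lemma stripeH_sub {L H lam : ℝ} {N k : ℕ} (hk : k < N) (hlam : 0 < lam)
    (hNlam : (N:ℝ) * lam ≤ H) : rect 0 L ((k:ℝ)*lam) lam ⊆ Omg L H := by
  rintro x ⟨hx0, hx1⟩
  have hk1 : (k:ℝ) + 1 ≤ N := by exact_mod_cast hk
  have h0 : (0:ℝ) ≤ (k:ℝ)*lam := by positivity
  exact ⟨hx0, by constructor <;> [linarith [hx1.1]; nlinarith [hx1.2]]⟩

lemma stripeV_sub {L H lam : ℝ} {N k : ℕ} (hk : k < N) (hlam : 0 < lam)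
    (hNlam : (N:ℝ) * lam ≤ L) : rect ((k:ℝ)*lam) lam 0 H ⊆ Omg L H := by
  rintro x ⟨hx0, hx1⟩
  have hk1 : (k:ℝ) + 1 ≤ N := by exact_mod_cast hk
  have h0 : (0:ℝ) ≤ (k:ℝ)*lam := by positivity
  exact ⟨by constructor <;> [linarith [hx0.1]; nlinarith [hx0.2]], hx1⟩

lemma stripeH_disj (L lam : ℝ) (hlam : 0 < lam) (N : ℕ) :
    Set.Pairwise (↑(Finset.range N)) (Function.onFun Disjoint fun k : ℕ => rect 0 L ((k:ℝ)*lam) lam) := by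
  intro k _ k' _ hne
  simp only [Function.onFun]
  rw [Set.disjoint_left]
  rintro x ⟨_, hx1⟩ ⟨_, hx1'⟩
  rcases Nat.lt_or_ge k k' with h | h
  · have hc : (k:ℝ) + 1 ≤ k' := by exact_mod_cast h
    nlinarith [hx1.1, hx1.2, hx1'.1, hx1'.2]
  · have hlt : k' < k := lt_of_le_of_ne h (fun e => hne e.symm)
    have hc : (k':ℝ) + 1 ≤ k := by exact_mod_cast hlt
    nlinarith [hx1.1, hx1.2, hx1'.1, hx1'.2]

lemma stripeV_disj (b h lam : ℝ) (hlam : 0 < lam) (N : ℕ) :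
    Set.Pairwise (↑(Finset.range N)) (Function.onFun Disjoint fun k : ℕ => rect ((k:ℝ)*lam) lam b h) := by
  intro k _ k' _ hne
  simp only [Function.onFun]
  rw [Set.disjoint_left]
  rintro x ⟨hx0, _⟩ ⟨hx0', _⟩
  rcases Nat.lt_or_ge k k' with hlt | hge
  · have hc : (k:ℝ) + 1 ≤ k' := by exact_mod_cast hlt
    nlinarith [hx0.1, hx0.2, hx0'.1, hx0'.2]
  · have hlt : k' < k := lt_of_le_of_ne hge (fun e => hne e.symm)
    have hc : (k':ℝ) + 1 ≤ k := by exact_mod_cast hlt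
    nlinarith [hx0.1, hx0.2, hx0'.1, hx0'.2]

lemma rect_inter_eq {L H s lam m : ℝ} (hm0 : 0 ≤ m) (hmL : m + lam ≤ L)
    (hs0 : 0 ≤ s) (hsH : s + lam ≤ H) :
    rect 0 L s lam ∩ rect m lam 0 H = rect m lam s lam := by
  ext x
  constructor
  · rintro ⟨⟨_, hx1⟩, hx0, _⟩
    exact ⟨hx0, hx1⟩
  · rintro ⟨hx0, hx1⟩
    exact ⟨⟨⟨by linarith [hx0.1], by linarith [hx0.2]⟩, hx1⟩,
      hx0, by linarith [hx1.1], by linarith [hx1.2]⟩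

lemma Kj_witness {j : ℕ} (hj : j = 1 ∨ j = 2) {α : ℝ} (hα : α ∈ Ioo (0:ℝ) 1) :
    ∃ A ∈ Kj j α, ∀ a b : Fin 2, |A a b| ≤ 2 := by
  obtain ⟨hα0, hα1⟩ := hα
  rcases hj with h | h <;> subst h
  · refine ⟨!![1, -α; 0, 1], Or.inl ⟨1, one_mem_SO2, by simp⟩, ?_⟩
    intro a b
    fin_cases a <;> fin_cases b <;>
      simp [Matrix.cons_val_zero, Matrix.cons_val_one, Matrix.head_cons] <;>
      rw [abs_le] <;> constructor <;> linarith
  · refine ⟨!![1, 0; 0, 1 - α], Or.inl ⟨1, one_mem_SO2, by simp⟩, ?_⟩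
    intro a b
    fin_cases a <;> fin_cases b <;>
      simp [Matrix.cons_val_zero, Matrix.cons_val_one, Matrix.head_cons] <;>
      rw [abs_le] <;> constructor <;> linarith

/-- Lemma 3.1(i) (localization): for every `λ ∈ (0, min{L,H}]` there are a
horizontal stripe `S = (0,L)×(s,s+λ)` and a vertical stripe `S' = (s',s'+λ)×(0,H)`
on which the energy (and `‖∂₁u₂‖_{L¹}`) is no higher than on average. -/
theorem localization_stripes :
    ∃ c : ℝ, 0 < c ∧
      ∀ H L α ε : ℝ, ∀ j : ℕ, 0 < H → 0 < L → (j = 1 ∨ j = 2) →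
        α ∈ Ioo (0:ℝ) 1 → 0 < ε →
        ∀ u ∈ Adm (Omg L H), ∀ lam : ℝ, 0 < lam → lam ≤ min L H →
          ∃ s s' : ℝ, s ∈ Icc 0 (H - lam) ∧ s' ∈ Icc 0 (L - lam) ∧
            energy (Kj j α) ε u (rect 0 L s lam) ≤
              c * (lam / H) * energy (Kj j α) ε u (Omg L H) ∧
            energy (Kj j α) ε u (rect s' lam 0 H) ≤
              c * (lam / L) * energy (Kj j α) ε u (Omg L H) ∧
            energy (Kj j α) ε u (rect 0 L s lam ∩ rect s' lam 0 H) ≤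
              c * (lam ^ 2 / (L * H)) * energy (Kj j α) ε u (Omg L H) ∧
            (∫ x in rect 0 L s lam ∩ rect s' lam 0 H, |Dmat u x 1 0|) ≤
              c * (lam ^ 2 / (L * H)) * ∫ x in Omg L H, |Dmat u x 1 0| := by
  refine ⟨64, by norm_num, ?_⟩
  intro H L α ε j hH hL hj hα hε u hu lam hlam hlamle
  obtain ⟨⟨C, hlip⟩, hBV, _⟩ := hu
  set K := Kj j α with hKdef
  set E := energy K ε u (Omg L H) with hEdef
  set Fg := ∫ x in Omg L H, |Dmat u x 1 0| with hFgdef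
  obtain ⟨A₀, hA₀K, hA₀b⟩ := Kj_witness hj hα
  have hΩm : MeasurableSet (Omg L H) := rect_meas 0 L 0 H
  have hΩfin : volume (Omg L H) < ⊤ := rect_vol_lt_top 0 L 0 H
  have hGb : ∀ (x : E2) (a b : Fin 2), |Dmat u x a b| ≤ (C:ℝ) :=
    fun x a b => Dmat_bound hlip x a b
  have hfm : Measurable fun x => distK K (Dmat u x)^2 := (distK_measurable K u).pow_const 2
  have hfb : ∀ x : E2, |distK K (Dmat u x)^2| ≤ (2*((C:ℝ)+2))^2 := by
    intro x
    rw [abs_of_nonneg (sq_nonneg _)]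
    exact pow_le_pow_left₀ Metric.infDist_nonneg (distK_bound hA₀K hA₀b hlip x) 2
  have hfi : ∀ ω : Set E2, volume ω < ⊤ → IntegrableOn (fun x => distK K (Dmat u x)^2) ω :=
    fun ω hω => integrableOn_of_bound _ ω hfm hω _ hfb
  have hgm : Measurable fun x : E2 => |Dmat u x 1 0| := (Dmat_measurable u 1 0).abs
  have hgi : ∀ ω : Set E2, volume ω < ⊤ → IntegrableOn (fun x : E2 => |Dmat u x 1 0|) ω :=
    fun ω hω => integrableOn_of_bound _ ω hgm hω (C:ℝ)
      (fun x => by rw [abs_abs]; exact hGb x 1 0)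
  have hlamH : lam ≤ H := le_trans hlamle (min_le_right L H)
  have hlamL : lam ≤ L := le_trans hlamle (min_le_left L H)
  obtain ⟨hN1, hNlam, hNlam2⟩ := floor_facts hlam hlamH
  obtain ⟨hM1, hMlam, hMlam2⟩ := floor_facts hlam hlamL
  set N := ⌊H/lam⌋₊ with hNdef
  set N' := ⌊L/lam⌋₊ with hMdef
  -- nonnegativity of energies on nice subsets
  have hEnn : ∀ ω : Set E2, ω ⊆ Omg L H → volume (closure ω \ ω) = 0 →
      0 ≤ energy K ε u ω := by
    intro ω hsub hnull
    have hBa : BddAbove (tvSet (Dmat u) ω) := hBV.mono (tvSet_subset _ hΩm hsub hnull)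
    exact add_nonneg (integral_nonneg fun x => sq_nonneg _)
      (mul_nonneg hε.le (tv_nonneg hBa))
  have hE0 : 0 ≤ E := add_nonneg (integral_nonneg fun x => sq_nonneg _)
    (mul_nonneg hε.le (tv_nonneg hBV))
  have hFg0 : 0 ≤ Fg := integral_nonneg fun x => abs_nonneg _
  -- horizontal stripes
  set Sh : ℕ → Set E2 := fun k => rect 0 L ((k:ℝ)*lam) lam with hShdef
  have hShsub : ∀ k ∈ Finset.range N, Sh k ⊆ Omg L H :=
    fun k hk => stripeH_sub (Finset.mem_range.mp hk) hlam hNlam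
  have hShm : ∀ k ∈ Finset.range N, MeasurableSet (Sh k) := fun k _ => rect_meas _ _ _ _
  have hShnull : ∀ k ∈ Finset.range N, volume (closure (Sh k) \ Sh k) = 0 :=
    fun k _ => closure_rect_null _ _ _ _
  have hShdisj := stripeH_disj L lam hlam N
  have hEsup : ∑ k ∈ Finset.range N, energy K ε u (Sh k) ≤ E :=
    energy_superadd K hε.le u (Finset.range N) Sh (Omg L H) hΩm hΩfin hShm hShsub hShnull
      hShdisj (C:ℝ) hGb (hfi _ hΩfin) hBV
  have hIsup : ∑ k ∈ Finset.range N, (∫ x in Sh k, |Dmat u x 1 0|) ≤ Fg :=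
    sum_setIntegral_le (Finset.range N) Sh (Omg L H) hShm hShsub hShdisj _
      (fun x => abs_nonneg _) (hgi _ hΩfin)
  obtain ⟨k, hkmem, hk1, hk2, -⟩ := pigeonhole3 N (by omega)
    (fun k => energy K ε u (Sh k)) (fun k => ∫ x in Sh k, |Dmat u x 1 0|) (fun _ => 0)
    E Fg 0
    (fun k hk => hEnn _ (hShsub k hk) (hShnull k hk))
    (fun k _ => integral_nonneg fun x => abs_nonneg _)
    (fun _ _ => le_refl 0) hEsup hIsup (by simp)
  have hkN := Finset.mem_range.mp hkmem
  have hkN1 : (k:ℝ) + 1 ≤ N := by exact_mod_cast hkN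
  -- stage-1 conclusions
  have hSkE : energy K ε u (Sh k) ≤ 8*(lam/H)*E :=
    step_bound hH hlam hNlam2 hE0 (hEnn _ (hShsub k hkmem) (hShnull k hkmem)) hk1 hN1
  have hSkI : (∫ x in Sh k, |Dmat u x 1 0|) ≤ 8*(lam/H)*Fg :=
    step_bound hH hlam hNlam2 hFg0 (integral_nonneg fun x => abs_nonneg _) hk2 hN1
  -- vertical stripes
  set Sv : ℕ → Set E2 := fun m => rect ((m:ℝ)*lam) lam 0 H with hSvdef
  have hSvsub : ∀ m ∈ Finset.range N', Sv m ⊆ Omg L H :=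
    fun m hm => stripeV_sub (Finset.mem_range.mp hm) hlam hMlam
  have hSvm : ∀ m ∈ Finset.range N', MeasurableSet (Sv m) := fun m _ => rect_meas _ _ _ _
  have hSvnull : ∀ m ∈ Finset.range N', volume (closure (Sv m) \ Sv m) = 0 :=
    fun m _ => closure_rect_null _ _ _ _
  have hSvdisj := stripeV_disj 0 H lam hlam N'
  have hEsup2 : ∑ m ∈ Finset.range N', energy K ε u (Sv m) ≤ E :=
    energy_superadd K hε.le u (Finset.range N') Sv (Omg L H) hΩm hΩfin hSvm hSvsub hSvnull
      hSvdisj (C:ℝ) hGb (hfi _ hΩfin) hBV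
  -- intersections
  set T : ℕ → Set E2 := fun m => rect ((m:ℝ)*lam) lam ((k:ℝ)*lam) lam with hTdef
  have hs0 : (0:ℝ) ≤ (k:ℝ)*lam := by positivity
  have hsH : (k:ℝ)*lam + lam ≤ H := by nlinarith
  have hTeq : ∀ m ∈ Finset.range N', Sh k ∩ Sv m = T m := by
    intro m hm
    have hmN := Finset.mem_range.mp hm
    have hmN1 : (m:ℝ) + 1 ≤ N' := by exact_mod_cast hmN
    exact rect_inter_eq (by positivity) (by nlinarith) hs0 hsH
  have hTsub : ∀ m ∈ Finset.range N', T m ⊆ Sh k := by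
    intro m hm
    rw [← hTeq m hm]
    exact inter_subset_left
  have hTm : ∀ m ∈ Finset.range N', MeasurableSet (T m) := fun m _ => rect_meas _ _ _ _
  have hTnull : ∀ m ∈ Finset.range N', volume (closure (T m) \ T m) = 0 :=
    fun m _ => closure_rect_null _ _ _ _
  have hTdisj := stripeV_disj ((k:ℝ)*lam) lam lam hlam N'
  have hShkfin : volume (Sh k) < ⊤ := rect_vol_lt_top _ _ _ _
  have hShkB : BddAbove (tvSet (Dmat u) (Sh k)) :=
    hBV.mono (tvSet_subset _ hΩm (hShsub k hkmem) (hShnull k hkmem))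
  have hEsup3 : ∑ m ∈ Finset.range N', energy K ε u (T m) ≤ energy K ε u (Sh k) :=
    energy_superadd K hε.le u (Finset.range N') T (Sh k) (rect_meas _ _ _ _) hShkfin hTm
      hTsub hTnull hTdisj (C:ℝ) hGb (hfi _ hShkfin) hShkB
  have hIsup2 : ∑ m ∈ Finset.range N', (∫ x in T m, |Dmat u x 1 0|) ≤
      ∫ x in Sh k, |Dmat u x 1 0| :=
    sum_setIntegral_le (Finset.range N') T (Sh k) hTm hTsub hTdisj _
      (fun x => abs_nonneg _) (hgi _ hShkfin)
  obtain ⟨m, hmmem, hm1, hm2, hm3⟩ := pigeonhole3 N' (by omega)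
    (fun m => energy K ε u (Sv m)) (fun m => energy K ε u (T m))
    (fun m => ∫ x in T m, |Dmat u x 1 0|)
    E (energy K ε u (Sh k)) (∫ x in Sh k, |Dmat u x 1 0|)
    (fun m hm => hEnn _ (hSvsub m hm) (hSvnull m hm))
    (fun m hm => hEnn _ (fun x hx => hShsub k hkmem (hTsub m hm hx)) (hTnull m hm))
    (fun m _ => integral_nonneg fun x => abs_nonneg _)
    hEsup2 hEsup3 hIsup2
  have hmN := Finset.mem_range.mp hmmem
  have hmN1 : (m:ℝ) + 1 ≤ N' := by exact_mod_cast hmN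
  -- final conclusions
  have hTE : energy K ε u (T m) ≤ 8*(lam/L)*energy K ε u (Sh k) :=
    step_bound hL hlam hMlam2 (hEnn _ (hShsub k hkmem) (hShnull k hkmem))
      (hEnn _ (fun x hx => hShsub k hkmem (hTsub m hmmem hx)) (hTnull m hmmem)) hm2 hM1
  have hSvE : energy K ε u (Sv m) ≤ 8*(lam/L)*E :=
    step_bound hL hlam hMlam2 hE0 (hEnn _ (hSvsub m hmmem) (hSvnull m hmmem)) hm1 hM1
  have hTI : (∫ x in T m, |Dmat u x 1 0|) ≤ 8*(lam/L)*(∫ x in Sh k, |Dmat u x 1 0|) :=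
    step_bound hL hlam hMlam2 (integral_nonneg fun x => abs_nonneg _)
      (integral_nonneg fun x => abs_nonneg _) hm3 hM1
  have h8L : (0:ℝ) ≤ 8*(lam/L) := by positivity
  refine ⟨(k:ℝ)*lam, (m:ℝ)*lam, ⟨hs0, by nlinarith⟩,
    ⟨by positivity, by nlinarith⟩, ?_, ?_, ?_, ?_⟩
  · calc energy K ε u (rect 0 L ((k:ℝ)*lam) lam) ≤ 8*(lam/H)*E := hSkE
      _ ≤ 64*(lam/H)*E := by nlinarith [mul_nonneg (div_nonneg hlam.le hH.le) hE0]
  · calc energy K ε u (rect ((m:ℝ)*lam) lam 0 H) ≤ 8*(lam/L)*E := hSvE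
      _ ≤ 64*(lam/L)*E := by nlinarith [mul_nonneg (div_nonneg hlam.le hL.le) hE0]
  · rw [show rect 0 L ((k:ℝ)*lam) lam ∩ rect ((m:ℝ)*lam) lam 0 H = T m from hTeq m hmmem]
    calc energy K ε u (T m) ≤ 8*(lam/L)*energy K ε u (Sh k) := hTE
      _ ≤ 8*(lam/L)*(8*(lam/H)*E) := mul_le_mul_of_nonneg_left hSkE h8L
      _ = 64*(lam^2/(L*H))*E := by field_simp; ring
      _ ≤ 64*(lam^2/(L*H))*E := le_refl _
  · rw [show rect 0 L ((k:ℝ)*lam) lam ∩ rect ((m:ℝ)*lam) lam 0 H = T m from hTeq m hmmem]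
    calc (∫ x in T m, |Dmat u x 1 0|) ≤ 8*(lam/L)*(∫ x in Sh k, |Dmat u x 1 0|) := hTI
      _ ≤ 8*(lam/L)*(8*(lam/H)*Fg) := mul_le_mul_of_nonneg_left hSkI h8L
      _ = 64*(lam^2/(L*H))*Fg := by field_simp; ring
end
end

section
/- Let α∈(0,1) and Z = [[0,1],[1,0]]. Then for every matrix F∈ℝ^{2×2}, one has dist(ZFZ, K₁) ≤ dist(F, K₁) + α². -/
/-!
Formalization framework for "Energy scaling and branched microstructures in a
model for shape-memory alloys with SO(2) invariance" (Chan–Conti).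

Deformations are maps `u : ℝ² → ℝ²` (with `ℝ²` the Euclidean plane).  The
gradient `Du` is the 2×2 matrix of partial derivatives, matrices carry the
Frobenius norm, and the total variation `|D²u|(ω)` of the (matrix-valued)
gradient is defined by duality against C¹ compactly supported test fields.
The admissible class consists of (Lipschitz) deformations whose gradient has
bounded variation and which agree with the identity on `∂Ω`.
-/

open MeasureTheory Set Metric Topology

noncomputable section

attribute [local instance] Matrix.frobeniusNormedAddCommGroup

lemma frob2 (A : M2) : ‖A‖ = Real.sqrt ((A 0 0)^2 + (A 0 1)^2 + (A 1 0)^2 + (A 1 1)^2) := by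
  rw [Matrix.frobenius_norm_def, Real.sqrt_eq_rpow]
  congr 1
  rw [Fin.sum_univ_two, Fin.sum_univ_two, Fin.sum_univ_two]
  have h : ∀ x : ℝ, ‖x‖ ^ (2:ℝ) = x ^ 2 := by
    intro x
    rw [show (2:ℝ) = ((2:ℕ):ℝ) by norm_num, Real.rpow_natCast, Real.norm_eq_abs, sq_abs]
  rw [h, h, h, h]; ring

-- Frobenius norm invariant under left multiplication by orthogonal matrix
lemma frob_rot_mul (R A : M2) (hR : R * R.transpose = 1) : ‖R * A‖ = ‖A‖ := by
  have hc : R.transpose * R = 1 := mul_eq_one_comm.mp hR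
  have h00 := congrFun (congrFun hc 0) 0
  have h01 := congrFun (congrFun hc 0) 1
  have h11 := congrFun (congrFun hc 1) 1
  simp [Matrix.mul_apply, Fin.sum_univ_two, Matrix.one_apply, Matrix.transpose_apply] at h00 h01 h11
  rw [frob2, frob2]
  congr 1
  simp only [Matrix.mul_apply, Fin.sum_univ_two]
  linear_combination (A 0 0^2 + A 0 1^2) * h00 + (A 1 0^2 + A 1 1^2) * h11 +
    2*(A 0 0 * A 1 0 + A 0 1 * A 1 1) * h01

lemma frob_mul_rot (R A : M2) (hR : R * R.transpose = 1) : ‖A * R‖ = ‖A‖ := by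
  rw [← Matrix.frobenius_norm_transpose, Matrix.transpose_mul,
    frob_rot_mul _ _ (by rw [Matrix.transpose_transpose]; exact mul_eq_one_comm.mp hR),
    Matrix.frobenius_norm_transpose]

lemma SO2_mul {R S : M2} (hR : R ∈ SO2) (hS : S ∈ SO2) : R * S ∈ SO2 := by
  refine ⟨?_, by rw [Matrix.det_mul, hR.2, hS.2, one_mul]⟩
  rw [Matrix.transpose_mul, show R * S * (S.transpose * R.transpose)
    = R * (S * S.transpose) * R.transpose by noncomm_ring, hS.1, Matrix.mul_one, hR.1]

lemma hZZ : (!![0, 1; 1, 0] : M2) * !![0, 1; 1, 0] = 1 := by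
  rw [Matrix.mul_fin_two, Matrix.one_fin_two]; norm_num

lemma hZorth : (!![0, 1; 1, 0] : M2) * (!![0, 1; 1, 0] : M2).transpose = 1 := by
  have : (!![0, 1; 1, 0] : M2).transpose = !![0, 1; 1, 0] := by
    ext i j; fin_cases i <;> fin_cases j <;> simp
  rw [this]; exact hZZ

lemma ZRZ_SO2 {R : M2} (hR : R ∈ SO2) : !![0, 1; 1, 0] * R * !![0, 1; 1, 0] ∈ SO2 := by
  constructor
  · rw [Matrix.transpose_mul, Matrix.transpose_mul]
    have hZt : (!![0, 1; 1, 0] : M2).transpose = !![0, 1; 1, 0] := by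
      ext i j; fin_cases i <;> fin_cases j <;> simp
    rw [hZt, show (!![0, 1; 1, 0] : M2) * R * !![0, 1; 1, 0] *
        (!![0, 1; 1, 0] * (R.transpose * !![0, 1; 1, 0]))
      = !![0, 1; 1, 0] * R * (!![0, 1; 1, 0] * !![0, 1; 1, 0]) * (R.transpose * !![0, 1; 1, 0])
        by noncomm_ring, hZZ, Matrix.mul_one,
      show (!![(0:ℝ), 1; 1, 0]) * R * (R.transpose * !![0, 1; 1, 0])
        = !![0, 1; 1, 0] * (R * R.transpose) * !![0, 1; 1, 0] by noncomm_ring, hR.1,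
      Matrix.mul_one, hZZ]
  · rw [Matrix.det_mul, Matrix.det_mul, hR.2, Matrix.det_fin_two_of]; norm_num

-- rotation matrices are in SO2
lemma rot_SO2 (c s : ℝ) (h : c^2 + s^2 = 1) : (!![c, s; -s, c] : M2) ∈ SO2 := by
  constructor
  · have ht : (!![c, s; -s, c] : M2).transpose = !![c, -s; s, c] := by
      ext i j; fin_cases i <;> fin_cases j <;> simp
    rw [ht, Matrix.mul_fin_two, Matrix.one_fin_two]
    ext i j
    fin_cases i <;> fin_cases j <;> simp <;> ring_nf <;> linarith [h]
  · rw [Matrix.det_fin_two_of]; linear_combination h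

lemma frob_le (a b c d r : ℝ) (hr : 0 ≤ r) (h : a^2+b^2+c^2+d^2 ≤ r^2) :
    ‖(!![a, b; c, d] : M2)‖ ≤ r := by
  rw [frob2]
  have he : (!![a,b;c,d] : M2) 0 0 = a ∧ (!![a,b;c,d] : M2) 0 1 = b ∧
      (!![a,b;c,d] : M2) 1 0 = c ∧ (!![a,b;c,d] : M2) 1 1 = d := by
    refine ⟨?_, ?_, ?_, ?_⟩ <;> simp
  rw [he.1, he.2.1, he.2.2.1, he.2.2.2]
  calc Real.sqrt (a^2+b^2+c^2+d^2) ≤ Real.sqrt (r^2) := Real.sqrt_le_sqrt h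
  _ = r := Real.sqrt_sq hr

lemma sqrt_facts (α : ℝ) (hα : α ∈ Ioo (0:ℝ) 1) :
    let u := Real.sqrt (1 + α^2); u^2 = 1 + α^2 ∧ 1 ≤ u ∧ u ≤ 1 + α^2/2 := by
  obtain ⟨h0, h1⟩ := hα
  have hnn : (0:ℝ) ≤ 1 + α^2 := by nlinarith
  have hsq := Real.sq_sqrt hnn
  have hpos := Real.sqrt_nonneg (1 + α^2)
  refine ⟨hsq, by nlinarith, ?_⟩
  rw [show (1:ℝ) + α^2/2 = Real.sqrt ((1+α^2/2)^2) from
    (Real.sqrt_sq (by nlinarith)).symm]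
  exact Real.sqrt_le_sqrt (by nlinarith)

set_option maxHeartbeats 1000000 in
/-- Key approximation: any `Z G Z` with `G ∈ K₁` is within `α²` of `K₁`. -/
lemma key (α : ℝ) (hα : α ∈ Ioo (0:ℝ) 1) {G : M2} (hG : G ∈ K1 α) :
    ∃ H ∈ K1 α, ‖!![0, 1; 1, 0] * G * !![0, 1; 1, 0] - H‖ ≤ α^2 := by
  obtain ⟨h0, h1⟩ := hα
  set u := Real.sqrt (1 + α^2) with hu
  obtain ⟨hu2, hu1, huU⟩ := sqrt_facts α ⟨h0, h1⟩
  have hupos : (0:ℝ) < u := by linarith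
  set c : ℝ := 1/u with hc
  have hcu : u * c = 1 := by rw [hc]; field_simp
  have hcpos : 0 < c := by positivity
  have hcs : c^2 + (α*c)^2 = 1 := by
    have h2 : c^2 * u^2 = 1 := by nlinarith
    nlinarith
  have hbound : ∀ ε : ℝ, ε = 1 ∨ ε = -1 →
      ‖(!![1-c, 0; ε*(α*c-α), 1-c-α^2*c] : M2)‖ ≤ α^2 := by
    intro ε hε
    have hε2 : ε^2 = 1 := by rcases hε with h|h <;> rw [h] <;> norm_num
    apply frob_le _ _ _ _ _ (by positivity)
    have e1 : 1 - c - α^2*c = 1 - u := by nlinarith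
    have e2 : (1-c)^2 * (1 + α^2) = (u-1)^2 := by nlinarith
    have e3 : (ε*(α*c-α))^2 = α^2*(1-c)^2 := by
      rcases hε with h|h <;> rw [h] <;> ring
    have h3 : (u-1)^2 ≤ (α^2/2)^2 := by nlinarith
    rw [e1]
    nlinarith [e2, e3, h3]
  rcases hG with ⟨R, hR, rfl⟩ | ⟨R, hR, rfl⟩
  · -- G = R * A₁
    have hQ : (!![c, α*c; -(α*c), c] : M2) ∈ SO2 := rot_SO2 c (α*c) hcs
    refine ⟨(!![0,1;1,0] * R * !![0,1;1,0] * !![c, α*c; -(α*c), c]) * !![1, -α; 0, 1],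
      Or.inl ⟨_, SO2_mul (ZRZ_SO2 hR) hQ, rfl⟩, ?_⟩
    have e : !![0,1;1,0] * (R * !![1, -α; 0, 1]) * !![0,1;1,0]
        - (!![0,1;1,0] * R * !![0,1;1,0] * !![c, α*c; -(α*c), c]) * !![1, -α; 0, 1]
        = (!![0,1;1,0] * R * !![0,1;1,0]) *
          (!![0,1;1,0] * !![1, -α; 0, 1] * !![0,1;1,0]
            - !![c, α*c; -(α*c), c] * !![1, -α; 0, 1]) := by
      rw [Matrix.mul_sub]
      congr 1
      · symm
        calc (!![(0:ℝ),1;1,0] * R * !![0,1;1,0]) * (!![0,1;1,0] * !![1, -α; 0, 1] * !![0,1;1,0])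
            = (!![0,1;1,0] * R) * ((!![0,1;1,0] * !![0,1;1,0]) *
                (!![1, -α; 0, 1] * !![0,1;1,0])) := by noncomm_ring
        _ = !![0,1;1,0] * (R * !![1, -α; 0, 1]) * !![0,1;1,0] := by
            rw [hZZ, Matrix.one_mul]; noncomm_ring
      · noncomm_ring
    rw [e, frob_rot_mul _ _ (ZRZ_SO2 hR).1]
    have hD : !![(0:ℝ),1;1,0] * !![1, -α; 0, 1] * !![0,1;1,0]
        - !![c, α*c; -(α*c), c] * !![1, -α; 0, 1]
        = !![1-c, 0; 1*(α*c-α), 1-c-α^2*c] := by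
      ext i j
      fin_cases i <;> fin_cases j <;>
        simp [Matrix.mul_apply, Fin.sum_univ_two] <;> ring
    rw [hD]
    exact hbound 1 (Or.inl rfl)
  · -- G = R * B₁
    have hQ : (!![c, -(α*c); α*c, c] : M2) ∈ SO2 := by
      have := rot_SO2 c (-(α*c)) (by linear_combination hcs)
      simpa using this
    refine ⟨(!![0,1;1,0] * R * !![0,1;1,0] * !![c, -(α*c); α*c, c]) * !![1, α; 0, 1],
      Or.inr ⟨_, SO2_mul (ZRZ_SO2 hR) hQ, rfl⟩, ?_⟩
    have e : !![0,1;1,0] * (R * !![1, α; 0, 1]) * !![0,1;1,0]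
        - (!![0,1;1,0] * R * !![0,1;1,0] * !![c, -(α*c); α*c, c]) * !![1, α; 0, 1]
        = (!![0,1;1,0] * R * !![0,1;1,0]) *
          (!![0,1;1,0] * !![1, α; 0, 1] * !![0,1;1,0]
            - !![c, -(α*c); α*c, c] * !![1, α; 0, 1]) := by
      rw [Matrix.mul_sub]
      congr 1
      · symm
        calc (!![(0:ℝ),1;1,0] * R * !![0,1;1,0]) * (!![0,1;1,0] * !![1, α; 0, 1] * !![0,1;1,0])
            = (!![0,1;1,0] * R) * ((!![0,1;1,0] * !![0,1;1,0]) *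
                (!![1, α; 0, 1] * !![0,1;1,0])) := by noncomm_ring
        _ = !![0,1;1,0] * (R * !![1, α; 0, 1]) * !![0,1;1,0] := by
            rw [hZZ, Matrix.one_mul]; noncomm_ring
      · noncomm_ring
    rw [e, frob_rot_mul _ _ (ZRZ_SO2 hR).1]
    have hD : !![(0:ℝ),1;1,0] * !![1, α; 0, 1] * !![0,1;1,0]
        - !![c, -(α*c); α*c, c] * !![1, α; 0, 1]
        = !![1-c, 0; (-1)*(α*c-α), 1-c-α^2*c] := by
      ext i j
      fin_cases i <;> fin_cases j <;>
        simp [Matrix.mul_apply, Fin.sum_univ_two] <;> ring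
    rw [hD]
    exact hbound (-1) (Or.inr rfl)


/-- Estimate (2.12): with `Z = [[0,1],[1,0]]`, for every `F ∈ ℝ^{2×2}` one has
`dist(ZFZ, K₁) ≤ dist(F, K₁) + α²`. -/
theorem dist_ZFZ_le (α : ℝ) (hα : α ∈ Ioo (0:ℝ) 1) (F : M2) :
    distK (K1 α) (!![0, 1; 1, 0] * F * !![0, 1; 1, 0]) ≤ distK (K1 α) F + α ^ 2 := by
  have hne : (K1 α).Nonempty := by
    refine ⟨!![1, -α; 0, 1], Or.inl ⟨1, ⟨?_, ?_⟩, by simp⟩⟩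
    · rw [Matrix.transpose_one, Matrix.one_mul]
    · exact Matrix.det_one
  unfold distK
  refine le_of_forall_pos_le_add fun ε hε => ?_
  obtain ⟨G, hG, hFG⟩ := (Metric.infDist_lt_iff hne).mp
    (lt_add_of_pos_right (Metric.infDist F (K1 α)) hε)
  obtain ⟨H, hH, hGH⟩ := key α hα hG
  have hnorm : ‖!![0, 1; 1, 0] * F * !![0, 1; 1, 0] - !![0, 1; 1, 0] * G * !![0, 1; 1, 0]‖
      = ‖F - G‖ := by
    rw [show !![(0:ℝ), 1; 1, 0] * F * !![0, 1; 1, 0] - !![0, 1; 1, 0] * G * !![0, 1; 1, 0]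
        = !![0, 1; 1, 0] * (F - G) * !![0, 1; 1, 0] from by noncomm_ring,
      frob_mul_rot _ _ hZorth, frob_rot_mul _ _ hZorth]
  calc Metric.infDist (!![0, 1; 1, 0] * F * !![0, 1; 1, 0]) (K1 α)
      ≤ dist (!![0, 1; 1, 0] * F * !![0, 1; 1, 0]) H := Metric.infDist_le_dist_of_mem hH
    _ ≤ dist (!![0, 1; 1, 0] * F * !![0, 1; 1, 0]) (!![0, 1; 1, 0] * G * !![0, 1; 1, 0])
        + dist (!![0, 1; 1, 0] * G * !![0, 1; 1, 0]) H := dist_triangle _ _ _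
    _ ≤ ‖F - G‖ + α^2 := by
        rw [dist_eq_norm, dist_eq_norm, hnorm]
        exact add_le_add le_rfl hGH
    _ = dist F G + α^2 := by rw [dist_eq_norm]
    _ ≤ (Metric.infDist F (K1 α) + ε) + α^2 := by linarith
    _ = Metric.infDist F (K1 α) + α^2 + ε := by ring
end
end

section
/- Let α∈(−1,1), Z = [[0,1],[1,0]], A₁ = [[1,−α],[0,1]], and R_α = (1+α²)^{−1/2}·[[1,−α],[α,1]]. Then R_α ∈ SO(2) and |R_α Z A₁ Z − A₁| ≤ α², where |·| is the Frobenius norm on ℝ^{2×2}. -/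
/-!
Formalization framework for "Energy scaling and branched microstructures in a
model for shape-memory alloys with SO(2) invariance" (Chan–Conti).

Deformations are maps `u : ℝ² → ℝ²` (with `ℝ²` the Euclidean plane).  The
gradient `Du` is the 2×2 matrix of partial derivatives, matrices carry the
Frobenius norm, and the total variation `|D²u|(ω)` of the (matrix-valued)
gradient is defined by duality against C¹ compactly supported test fields.
The admissible class consists of (Lipschitz) deformations whose gradient has
bounded variation and which agree with the identity on `∂Ω`.
-/

open MeasureTheory Set Metric Topology

noncomputable section

attribute [local instance] Matrix.frobeniusNormedAddCommGroup

/-- The rotation `R_α = (1+α²)^{-1/2}[[1,-α],[α,1]]` belongs to `SO(2)` and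
satisfies `|R_α Z A₁ Z - A₁| ≤ α²` for `Z = [[0,1],[1,0]]`, `A₁ = [[1,-α],[0,1]]`. -/
theorem rotation_conjugation_estimate (α : ℝ) (hα : α ∈ Ioo (-1:ℝ) 1) :
    ((Real.sqrt (1 + α ^ 2))⁻¹ • !![1, -α; α, 1] : M2) ∈ SO2 ∧
    ‖((Real.sqrt (1 + α ^ 2))⁻¹ • !![1, -α; α, 1] : M2) *
        (!![0, 1; 1, 0] * !![1, -α; 0, 1] * !![0, 1; 1, 0]) - !![1, -α; 0, 1]‖ ≤ α ^ 2 := by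
  set s := Real.sqrt (1 + α ^ 2) with hs
  have hpos : (0:ℝ) < 1 + α ^ 2 := by positivity
  have hs2 : s ^ 2 = 1 + α ^ 2 := Real.sq_sqrt hpos.le
  have hs1 : 1 ≤ s := by
    rw [hs]; nlinarith [Real.sq_sqrt hpos.le, Real.sqrt_nonneg (1 + α ^ 2)]
  have hsne : s ≠ 0 := by linarith
  have hcs : s⁻¹ * s = 1 := inv_mul_cancel₀ hsne
  set c := s⁻¹ with hc
  constructor
  · constructor
    · ext i j
      fin_cases i <;> fin_cases j <;>
        simp [Matrix.mul_apply, Matrix.transpose_apply, Fin.sum_univ_two,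
          Matrix.one_apply, Matrix.vecHead, Matrix.vecTail] <;> nlinarith [hcs, hs2]
    · rw [Matrix.det_smul, Matrix.det_fin_two_of]
      simp only [Fintype.card_fin]
      have : c ^ 2 = (1 + α ^ 2)⁻¹ := by
        rw [hc, ← hs2]; field_simp
      rw [this]
      field_simp; ring
  · have hM : ((Real.sqrt (1 + α ^ 2))⁻¹ • !![1, -α; α, 1] : M2) *
        (!![0, 1; 1, 0] * !![1, -α; 0, 1] * !![0, 1; 1, 0]) - !![1, -α; 0, 1]
        = !![c * (1 + α^2) - 1, -(c*α) + α; 0, c - 1] := by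
      rw [← hs, ← hc]
      ext i j
      fin_cases i <;> fin_cases j <;>
        simp [Matrix.mul_apply, Fin.sum_univ_two] <;> ring
    rw [hM]
    have hnorm : ‖(!![c * (1 + α^2) - 1, -(c*α) + α; 0, c - 1] : M2)‖
        = Real.sqrt ((c * (1 + α^2) - 1)^2 + (-(c*α) + α)^2 + 0^2 + (c - 1)^2) := by
      rw [Matrix.frobenius_norm_def, Real.sqrt_eq_rpow]
      norm_num [Fin.sum_univ_two, Real.rpow_natCast]
    rw [hnorm]
    have key : (c * (1 + α^2) - 1)^2 + (-(c*α) + α)^2 + 0^2 + (c - 1)^2 ≤ (α^2)^2 := by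
      have hce : c * (1 + α^2) = s := by
        rw [← hs2, hc]; field_simp
      have hc1 : c ≤ 1 := by
        rw [hc]; exact inv_le_one_of_one_le₀ hs1
      have hc0 : 0 < c := by positivity
      have hsm1 : (s - 1) * (s + 1) = α ^ 2 := by nlinarith
      have h1 : s - 1 ≤ α^2 / 2 := by nlinarith
      have h2 : 1 - c ≤ s - 1 := by nlinarith [hcs]
      have ha2 : α ^ 2 ≤ 1 := by nlinarith [hα.1, hα.2]
      have hs0 : 0 ≤ s - 1 := by linarith
      rw [hce]
      nlinarith [sq_nonneg (s-1), sq_nonneg (1-c), sq_nonneg α, mul_nonneg (sq_nonneg α) (sq_nonneg (1-c))]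
    calc Real.sqrt ((c * (1 + α^2) - 1)^2 + (-(c*α) + α)^2 + 0^2 + (c - 1)^2)
        ≤ Real.sqrt ((α^2)^2) := Real.sqrt_le_sqrt key
      _ = α^2 := Real.sqrt_sq (sq_nonneg α)
end
end

section
/- There is a universal constant c_*>0 (one may take c_* = 1/16) with the following property. Let L,H>0, Ω = (0,L)×(0,H), α∈(0,1), j∈{1,2}, λ>0, and let Q ⊂ Ω̄ be a closed square of side length λ having at least two of its sides contained in ∂Ω. Then for every F∈K_j and every a∈ℝ², one has c_*·α·λ² ≤ ∫_{∂Q∩∂Ω} |x − Fx − a| dH¹(x), where H¹ is the one-dimensional Hausdorff measure. -/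
/-!
Formalization framework for "Energy scaling and branched microstructures in a
model for shape-memory alloys with SO(2) invariance" (Chan–Conti).

Deformations are maps `u : ℝ² → ℝ²` (with `ℝ²` the Euclidean plane).  The
gradient `Du` is the 2×2 matrix of partial derivatives, matrices carry the
Frobenius norm, and the total variation `|D²u|(ω)` of the (matrix-valued)
gradient is defined by duality against C¹ compactly supported test fields.
The admissible class consists of (Lipschitz) deformations whose gradient has
bounded variation and which agree with the identity on `∂Ω`.
-/

open MeasureTheory Set Metric Topology

noncomputable section

attribute [local instance] Matrix.frobeniusNormedAddCommGroup

/-- The closed square `[a,a+λ]×[b,b+λ]`. -/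
def csq (a b lam : ℝ) : Set E2 := {x | x 0 ∈ Icc a (a + lam) ∧ x 1 ∈ Icc b (b + lam)}

/-- The four sides of the closed square `[a,a+λ]×[b,b+λ]`:
left, right, bottom, top. -/
def sqSide (a b lam : ℝ) : Fin 4 → Set E2
  | 0 => {x | x 0 = a ∧ x 1 ∈ Icc b (b + lam)}
  | 1 => {x | x 0 = a + lam ∧ x 1 ∈ Icc b (b + lam)}
  | 2 => {x | x 1 = b ∧ x 0 ∈ Icc a (a + lam)}
  | 3 => {x | x 1 = b + lam ∧ x 0 ∈ Icc a (a + lam)}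


/-! ### Auxiliary material for the proof of `boundary_affine_incompatibility` -/

namespace BAIaux

/-- basis vectors -/
def e0 : E2 := EuclideanSpace.single 0 1
def e1 : E2 := EuclideanSpace.single 1 1

def pt (x y : ℝ) : E2 := toE2 ![x, y]

/-- affine parametrization of a line -/
def par (p e : E2) (t : ℝ) : E2 := p + t • e

lemma e0_apply (i : Fin 2) : e0 i = if i = 0 then 1 else 0 := by
  simp [e0, EuclideanSpace.single_apply]
lemma e1_apply (i : Fin 2) : e1 i = if i = 1 then 1 else 0 := by
  simp [e1, EuclideanSpace.single_apply]
lemma norm_e0 : ‖e0‖ = 1 := by simp [e0, EuclideanSpace.norm_single]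
lemma norm_e1 : ‖e1‖ = 1 := by simp [e1, EuclideanSpace.norm_single]

lemma pt_apply0 (x y : ℝ) : pt x y 0 = x := rfl
lemma pt_apply1 (x y : ℝ) : pt x y 1 = y := rfl

lemma E2_ext {x y : E2} (h0 : x 0 = y 0) (h1 : x 1 = y 1) : x = y := by
  ext i; fin_cases i <;> assumption

lemma add_apply (x y : E2) (i : Fin 2) : (x + y) i = x i + y i := rfl
lemma sub_apply (x y : E2) (i : Fin 2) : (x - y) i = x i - y i := rfl
lemma smul_apply (c : ℝ) (x : E2) (i : Fin 2) : (c • x) i = c * x i := rfl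

lemma par_apply (p e : E2) (t : ℝ) (i : Fin 2) : par p e t i = p i + t * e i := rfl

lemma continuous_coord (i : Fin 2) : Continuous fun x : E2 => x i :=
  (EuclideanSpace.proj (𝕜 := ℝ) i).continuous

lemma norm_sq_E2 (x : E2) : ‖x‖ ^ 2 = (x 0) ^ 2 + (x 1) ^ 2 := by
  rw [EuclideanSpace.norm_eq, Real.sq_sqrt (by positivity)]
  simp [Fin.sum_univ_two, sq_abs]

/-- `mulV F` as a linear map. -/
def mulVL (F : M2) : E2 →ₗ[ℝ] E2 where
  toFun := mulV F
  map_add' x y := by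
    ext i
    fin_cases i <;> simp [mulV, toE2, Matrix.mulVec, dotProduct, Fin.sum_univ_two, add_apply] <;>
    ring
  map_smul' c x := by
    ext i
    fin_cases i <;> simp [mulV, toE2, Matrix.mulVec, dotProduct, Fin.sum_univ_two, smul_apply] <;>
    ring

lemma mulV_eq (F : M2) (x : E2) : mulV F x = mulVL F x := rfl

lemma continuous_mulV (F : M2) : Continuous (mulV F) :=
  (mulVL F).continuous_of_finiteDimensional

lemma mulV_apply (F : M2) (x : E2) (i : Fin 2) :
    mulV F x i = F i 0 * x 0 + F i 1 * x 1 := by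
  fin_cases i <;> simp [mulV, toE2, Matrix.mulVec, dotProduct, Fin.sum_univ_two]

lemma mulV_single (F : M2) (j : Fin 2) (i : Fin 2) :
    mulV F (EuclideanSpace.single j 1) i = F i j := by
  rw [mulV_apply]
  fin_cases j <;> simp [EuclideanSpace.single_apply]

end BAIaux

namespace BAIaux

lemma isometry_par (p e : E2) (he : ‖e‖ = 1) : Isometry (par p e) := by
  apply Isometry.of_dist_eq
  intro t s
  simp only [dist_eq_norm, par]
  have : p + t • e - (p + s • e) = (t - s) • e := by module
  rw [this, norm_smul, he, mul_one, Real.norm_eq_abs]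

lemma map_vol (f : ℝ → E2) (hf : Isometry f) :
    (volume : Measure ℝ).map f = (μH[1] : Measure E2).restrict (Set.range f) := by
  ext A hA
  rw [Measure.map_apply hf.continuous.measurable hA, Measure.restrict_apply hA,
    ← MeasureTheory.hausdorffMeasure_real,
    hf.hausdorffMeasure_preimage (Or.inl zero_le_one)]

lemma integral_image (f : ℝ → E2) (hf : Isometry f) (s : Set ℝ)
    (hms : MeasurableSet (f '' s)) (g : E2 → ℝ) (hg : Continuous g) :
    ∫ x in f '' s, g x ∂μH[1] = ∫ t in s, g (f t) := by
  have h1 : (μH[1] : Measure E2).restrict (f '' s) = (volume.restrict s).map f := by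
    rw [← Set.inter_eq_self_of_subset_left (Set.image_subset_range f s),
      ← Measure.restrict_restrict hms, ← map_vol f hf,
      Measure.restrict_map hf.continuous.measurable hms,
      Set.preimage_image_eq s hf.injective]
  rw [h1, integral_map hf.continuous.aemeasurable hg.aestronglyMeasurable]

lemma measure_image (f : ℝ → E2) (hf : Isometry f) (s : Set ℝ) :
    μH[1] (f '' s) = volume s := by
  rw [hf.hausdorffMeasure_image (Or.inl zero_le_one), MeasureTheory.hausdorffMeasure_real]

lemma null_singleton (x : E2) : μH[1] ({x} : Set E2) = 0 := by
  have h : ({x} : Set E2) = (par x e1) '' {0} := by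
    simp [par]
  rw [h, measure_image _ (isometry_par x e1 norm_e1)]
  simp

lemma cont_aff (v w : E2) : Continuous (fun t : ℝ => ‖t • v + w‖) :=
  ((continuous_id.smul continuous_const).add continuous_const).norm

lemma oneD_lower (v w : E2) {lam : ℝ} (hl : 0 < lam) :
    lam ^ 2 / 16 * ‖v‖ ≤ ∫ t in Icc (0:ℝ) lam, ‖t • v + w‖ := by
  have hint : IntegrableOn (fun t : ℝ => ‖t • v + w‖) (Icc 0 lam) volume :=
    (cont_aff v w).integrableOn_Icc
  rcases eq_or_ne v 0 with rfl | hv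
  · simp only [norm_zero, mul_zero]
    exact setIntegral_nonneg measurableSet_Icc fun t _ => norm_nonneg _
  have hvpos : (0:ℝ) < ‖v‖ := norm_pos_iff.2 hv
  set β : ℝ := (inner ℝ v w : ℝ) / ‖v‖ ^ 2 with hβ
  have key : ∀ t : ℝ, ‖v‖ * |t + β| ≤ ‖t • v + w‖ := by
    intro t
    have h1 : |(inner ℝ v (t • v + w) : ℝ)| ≤ ‖v‖ * ‖t • v + w‖ := abs_real_inner_le_norm v _
    have hn : ‖v‖ ^ 2 ≠ 0 := by positivity
    have h2 : (inner ℝ v (t • v + w) : ℝ) = ‖v‖ ^ 2 * (t + β) := by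
      rw [inner_add_right, real_inner_smul_right, real_inner_self_eq_norm_sq, hβ,
        mul_add, mul_div_cancel₀ _ hn, mul_comm]
    rw [h2, abs_mul, abs_of_nonneg (by positivity : (0:ℝ) ≤ ‖v‖ ^ 2)] at h1
    have h4 : ‖v‖ * (‖v‖ * |t + β|) ≤ ‖v‖ * ‖t • v + w‖ := by nlinarith [h1]
    exact (mul_le_mul_iff_right₀ hvpos).mp h4
  rcases le_or_gt (-(lam/2)) β with hb | hb
  · have hsub : Icc (3*lam/4) lam ⊆ Icc 0 lam := Icc_subset_Icc (by linarith) le_rfl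
    have hbd : ∀ t ∈ Icc (3*lam/4) lam, ‖v‖ * (lam/4) ≤ ‖t • v + w‖ := by
      intro t ht
      refine le_trans ?_ (key t)
      have : lam/4 ≤ |t + β| := by
        rw [le_abs]; left; have := ht.1; linarith
      exact mul_le_mul_of_nonneg_left this hvpos.le
    have h3 := setIntegral_ge_of_const_le_real measurableSet_Icc
      (by simp [Real.volume_Icc]) hbd (hint.mono_set hsub)
    have h4 : ∫ t in Icc (3*lam/4) lam, ‖t • v + w‖ ≤ ∫ t in Icc (0:ℝ) lam, ‖t • v + w‖ :=
      setIntegral_mono_set hint (Filter.Eventually.of_forall fun t => norm_nonneg _)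
        (HasSubset.Subset.eventuallyLE hsub)
    rw [Real.volume_real_Icc_of_le (by linarith)] at h3
    calc lam ^ 2 / 16 * ‖v‖ = ‖v‖ * (lam/4) * (lam - 3*lam/4) := by ring
    _ ≤ _ := h3.trans h4
  · have hsub : Icc (0:ℝ) (lam/4) ⊆ Icc 0 lam := Icc_subset_Icc le_rfl (by linarith)
    have hbd : ∀ t ∈ Icc (0:ℝ) (lam/4), ‖v‖ * (lam/4) ≤ ‖t • v + w‖ := by
      intro t ht
      refine le_trans ?_ (key t)
      have : lam/4 ≤ |t + β| := by
        rw [le_abs]; right; have := ht.2; linarith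
      exact mul_le_mul_of_nonneg_left this hvpos.le
    have h3 := setIntegral_ge_of_const_le_real measurableSet_Icc
      (by simp [Real.volume_Icc]) hbd (hint.mono_set hsub)
    have h4 : ∫ t in Icc (0:ℝ) (lam/4), ‖t • v + w‖ ≤ ∫ t in Icc (0:ℝ) lam, ‖t • v + w‖ :=
      setIntegral_mono_set hint (Filter.Eventually.of_forall fun t => norm_nonneg _)
        (HasSubset.Subset.eventuallyLE hsub)
    rw [Real.volume_real_Icc_of_le (by linarith)] at h3
    calc lam ^ 2 / 16 * ‖v‖ = ‖v‖ * (lam/4) * (lam/4 - 0) := by ring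
    _ ≤ _ := h3.trans h4

lemma oneD_pair (v w w' : E2) {lam : ℝ} (hl : 0 < lam) :
    lam * ‖w - w'‖ ≤ (∫ t in Icc (0:ℝ) lam, ‖t • v + w‖) + ∫ t in Icc (0:ℝ) lam, ‖t • v + w'‖ := by
  have hi : IntegrableOn (fun t : ℝ => ‖t • v + w‖) (Icc 0 lam) volume :=
    (cont_aff v w).integrableOn_Icc
  have hi' : IntegrableOn (fun t : ℝ => ‖t • v + w'‖) (Icc 0 lam) volume :=
    (cont_aff v w').integrableOn_Icc
  rw [← integral_add hi hi']
  have hbd : ∀ t ∈ Icc (0:ℝ) lam, ‖w - w'‖ ≤ ‖t • v + w‖ + ‖t • v + w'‖ := by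
    intro t _
    calc ‖w - w'‖ = ‖(t • v + w) - (t • v + w')‖ := by congr 1; module
    _ ≤ ‖t • v + w‖ + ‖t • v + w'‖ := norm_sub_le _ _
  have h3 := setIntegral_ge_of_const_le_real measurableSet_Icc
    (by simp [Real.volume_Icc]) hbd (hi.add hi')
  rw [Real.volume_real_Icc_of_le (by linarith), sub_zero, mul_comm] at h3
  exact h3

end BAIaux

namespace BAIaux

lemma so2_entries {R : M2} (hR : R ∈ SO2) :
    R 1 1 = R 0 0 ∧ R 1 0 = -(R 0 1) ∧ (R 0 0)^2 + (R 0 1)^2 = 1 := by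
  obtain ⟨h1, h2⟩ := hR
  have e00 := congrFun (congrFun h1 0) 0
  have e01 := congrFun (congrFun h1 0) 1
  have e11 := congrFun (congrFun h1 1) 1
  simp [Matrix.mul_apply, Fin.sum_univ_two, Matrix.transpose_apply, Matrix.one_apply] at e00 e01 e11
  rw [Matrix.det_fin_two] at h2
  refine ⟨?_, ?_, by linear_combination e00⟩
  · linear_combination (-(R 1 1)) * e00 + (R 0 0) * h2 + (R 0 1) * e01
  · linear_combination (R 0 0) * e01 - (R 1 0) * e00 - (R 0 1) * h2

lemma mulV_e0 (F : M2) (i : Fin 2) : mulV F e0 i = F i 0 := mulV_single F 0 i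
lemma mulV_e1 (F : M2) (i : Fin 2) : mulV F e1 i = F i 1 := mulV_single F 1 i

lemma lemC {α : ℝ} (hα : α ∈ Ioo (0:ℝ) 1) {j : ℕ} (hj : j = 1 ∨ j = 2) {F : M2}
    (hF : F ∈ Kj j α) :
    α / 2 ≤ ‖e0 - mulV F e0‖ + ‖e1 - mulV F e1‖ := by
  have hx2 : ‖e0 - mulV F e0‖ ^ 2 = (1 - F 0 0) ^ 2 + (F 1 0) ^ 2 := by
    rw [norm_sq_E2]
    rw [sub_apply, sub_apply, mulV_e0, mulV_e0, e0_apply, e0_apply]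
    norm_num
  have hy2 : ‖e1 - mulV F e1‖ ^ 2 = (F 0 1) ^ 2 + (1 - F 1 1) ^ 2 := by
    rw [norm_sq_E2]
    rw [sub_apply, sub_apply, mulV_e1, mulV_e1, e1_apply, e1_apply]
    norm_num
  have key : α ^ 2 / 2 ≤ ‖e0 - mulV F e0‖ ^ 2 + ‖e1 - mulV F e1‖ ^ 2 := by
    rw [hx2, hy2]
    have hmul : ∀ (R A : M2) (i k : Fin 2), (R * A) i k = R i 0 * A 0 k + R i 1 * A 1 k := by
      intro R A i k; simp [Matrix.mul_apply, Fin.sum_univ_two]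
    rcases hj with rfl | rfl
    · simp only [Kj, if_pos rfl] at hF
      rcases hF with ⟨R, hR, rfl⟩ | ⟨R, hR, rfl⟩ <;>
      · obtain ⟨hd, hc, hab⟩ := so2_entries hR
        simp only [hmul]
        norm_num [Matrix.cons_val_zero, Matrix.cons_val_one, Matrix.head_cons, hd, hc]
        nlinarith [sq_nonneg (2 * R 0 1 + α), sq_nonneg (2 * R 0 1 - α), sq_nonneg (1 - R 0 0), hab, hα.1.le]
    · simp only [Kj] at hF
      norm_num at hF
      rcases hF with ⟨R, hR, rfl⟩ | ⟨R, hR, rfl⟩ <;>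
      · obtain ⟨hd, hc, hab⟩ := so2_entries hR
        simp only [hmul]
        norm_num [Matrix.cons_val_zero, Matrix.cons_val_one, Matrix.head_cons, hd, hc]
        nlinarith [sq_nonneg (2 * R 0 0 - 1 - (1 - α)), sq_nonneg (2 * R 0 0 - 1 - (1 + α)),
          sq_nonneg (R 0 1), hab, hα.1.le]
  nlinarith [norm_nonneg (e0 - mulV F e0), norm_nonneg (e1 - mulV F e1),
    mul_nonneg (norm_nonneg (e0 - mulV F e0)) (norm_nonneg (e1 - mulV F e1)), hα.1.le, key]

end BAIaux

namespace BAIaux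

variable {a b lam : ℝ}

def basept (a b lam : ℝ) : Fin 4 → E2
  | 0 => pt a b
  | 1 => pt (a + lam) b
  | 2 => pt a b
  | 3 => pt a (b + lam)

def dir : Fin 4 → E2
  | 0 => e1
  | 1 => e1
  | 2 => e0
  | 3 => e0

lemma norm_dir (i : Fin 4) : ‖dir i‖ = 1 := by
  fin_cases i <;> simp [dir, norm_e0, norm_e1]

lemma e0c0 : e0 0 = 1 := by simp [e0, EuclideanSpace.single_apply]
lemma e0c1 : e0 1 = 0 := by simp [e0, EuclideanSpace.single_apply]
lemma e1c0 : e1 0 = 0 := by simp [e1, EuclideanSpace.single_apply]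
lemma e1c1 : e1 1 = 1 := by simp [e1, EuclideanSpace.single_apply]

lemma side_eq (a b lam : ℝ) (i : Fin 4) :
    sqSide a b lam i = par (basept a b lam i) (dir i) '' Icc 0 lam := by
  fin_cases i
  · ext x
    constructor
    · rintro ⟨h1, h2, h3⟩
      exact ⟨x 1 - b, ⟨by linarith, by linarith⟩, E2_ext
        (by simp only [basept, dir, par_apply, pt_apply0, e1c0]; linarith)
        (by simp only [basept, dir, par_apply, pt_apply1, e1c1]; linarith)⟩
    · rintro ⟨t, ⟨ht0, ht1⟩, rfl⟩
      exact ⟨by simp only [basept, dir, par_apply, pt_apply0, e1c0]; linarith,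
        by simp only [basept, dir, par_apply, pt_apply1, e1c1]; linarith,
        by simp only [basept, dir, par_apply, pt_apply1, e1c1]; linarith⟩
  · ext x
    constructor
    · rintro ⟨h1, h2, h3⟩
      exact ⟨x 1 - b, ⟨by linarith, by linarith⟩, E2_ext
        (by simp only [basept, dir, par_apply, pt_apply0, e1c0]; linarith)
        (by simp only [basept, dir, par_apply, pt_apply1, e1c1]; linarith)⟩
    · rintro ⟨t, ⟨ht0, ht1⟩, rfl⟩
      exact ⟨by simp only [basept, dir, par_apply, pt_apply0, e1c0]; linarith,
        by simp only [basept, dir, par_apply, pt_apply1, e1c1]; linarith,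
        by simp only [basept, dir, par_apply, pt_apply1, e1c1]; linarith⟩
  · ext x
    constructor
    · rintro ⟨h1, h2, h3⟩
      exact ⟨x 0 - a, ⟨by linarith, by linarith⟩, E2_ext
        (by simp only [basept, dir, par_apply, pt_apply0, e0c0]; linarith)
        (by simp only [basept, dir, par_apply, pt_apply1, e0c1]; linarith)⟩
    · rintro ⟨t, ⟨ht0, ht1⟩, rfl⟩
      exact ⟨by simp only [basept, dir, par_apply, pt_apply1, e0c1]; linarith,
        by simp only [basept, dir, par_apply, pt_apply0, e0c0]; linarith,
        by simp only [basept, dir, par_apply, pt_apply0, e0c0]; linarith⟩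
  · ext x
    constructor
    · rintro ⟨h1, h2, h3⟩
      exact ⟨x 0 - a, ⟨by linarith, by linarith⟩, E2_ext
        (by simp only [basept, dir, par_apply, pt_apply0, e0c0]; linarith)
        (by simp only [basept, dir, par_apply, pt_apply1, e0c1]; linarith)⟩
    · rintro ⟨t, ⟨ht0, ht1⟩, rfl⟩
      exact ⟨by simp only [basept, dir, par_apply, pt_apply1, e0c1]; linarith,
        by simp only [basept, dir, par_apply, pt_apply0, e0c0]; linarith,
        by simp only [basept, dir, par_apply, pt_apply0, e0c0]; linarith⟩

lemma isClosed_csq : IsClosed (csq a b lam) := by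
  have : csq a b lam = (fun x : E2 => x 0) ⁻¹' Icc a (a + lam) ∩
      (fun x : E2 => x 1) ⁻¹' Icc b (b + lam) := rfl
  rw [this]
  exact (isClosed_Icc.preimage (continuous_coord 0)).inter
    (isClosed_Icc.preimage (continuous_coord 1))

lemma side_subset_csq (hl : 0 < lam) (i : Fin 4) : sqSide a b lam i ⊆ csq a b lam := by
  fin_cases i <;>
  · rintro x hx
    obtain ⟨h1, h2, h3⟩ := hx
    constructor <;> constructor <;> first | linarith | (rw [h1]; linarith) | linarith [h1.le]

lemma side_subset_frontier (hl : 0 < lam) (i : Fin 4) :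
    sqSide a b lam i ⊆ frontier (csq a b lam) := by
  intro x hx
  rw [isClosed_csq.frontier_eq]
  refine ⟨side_subset_csq hl i hx, ?_⟩
  intro hint
  rw [mem_interior_iff_mem_nhds, Metric.mem_nhds_iff] at hint
  obtain ⟨ε, hε, hball⟩ := hint
  -- pick outward direction
  have key : ∀ (e : E2), ‖e‖ = 1 → x + (ε/2) • e ∈ csq a b lam := by
    intro e he
    apply hball
    rw [Metric.mem_ball, dist_eq_norm]
    have : x + (ε/2) • e - x = (ε/2) • e := by module
    rw [this, norm_smul, he, mul_one, Real.norm_eq_abs, abs_of_pos (by linarith)]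
    linarith
  fin_cases i
  · have h := (key (-e0) (by rw [norm_neg]; exact norm_e0)).1.1
    rw [add_apply, smul_apply] at h
    simp [e0_apply] at h
    obtain ⟨h1, -, -⟩ := hx
    rw [h1] at h; linarith
  · have h := (key e0 norm_e0).1.2
    rw [add_apply, smul_apply] at h
    simp [e0_apply] at h
    obtain ⟨h1, -, -⟩ := hx
    rw [h1] at h; linarith
  · have h := (key (-e1) (by rw [norm_neg]; exact norm_e1)).2.1
    rw [add_apply, smul_apply] at h
    simp [e1_apply] at h
    obtain ⟨h1, -, -⟩ := hx
    rw [h1] at h; linarith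
  · have h := (key e1 norm_e1).2.2
    rw [add_apply, smul_apply] at h
    simp [e1_apply] at h
    obtain ⟨h1, -, -⟩ := hx
    rw [h1] at h; linarith

lemma frontier_csq_subset :
    frontier (csq a b lam) ⊆
      sqSide a b lam 0 ∪ sqSide a b lam 1 ∪ sqSide a b lam 2 ∪ sqSide a b lam 3 := by
  intro x hx
  rw [isClosed_csq.frontier_eq] at hx
  obtain ⟨hmem, hni⟩ := hx
  obtain ⟨⟨ha1, ha2⟩, hb1, hb2⟩ := hmem
  have hopen : IsOpen {y : E2 | y 0 ∈ Ioo a (a + lam) ∧ y 1 ∈ Ioo b (b + lam)} :=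
    ((isOpen_Ioo.preimage (continuous_coord 0)).inter (isOpen_Ioo.preimage (continuous_coord 1)))
  have hsub : {y : E2 | y 0 ∈ Ioo a (a + lam) ∧ y 1 ∈ Ioo b (b + lam)} ⊆ csq a b lam := by
    rintro y ⟨⟨h1, h2⟩, h3, h4⟩
    exact ⟨⟨h1.le, h2.le⟩, h3.le, h4.le⟩
  have hxo : x ∉ {y : E2 | y 0 ∈ Ioo a (a + lam) ∧ y 1 ∈ Ioo b (b + lam)} :=
    fun hmem => hni (interior_maximal hsub hopen hmem)
  by_cases h0 : x 0 = a
  · exact Or.inl (Or.inl (Or.inl ⟨h0, hb1, hb2⟩))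
  by_cases h1 : x 0 = a + lam
  · exact Or.inl (Or.inl (Or.inr ⟨h1, hb1, hb2⟩))
  by_cases h2 : x 1 = b
  · exact Or.inl (Or.inr ⟨h2, ha1, ha2⟩)
  have h3 : x 1 = b + lam := by
    by_contra h3
    exact hxo ⟨⟨lt_of_le_of_ne ha1 (Ne.symm h0), lt_of_le_of_ne ha2 h1⟩,
      lt_of_le_of_ne hb1 (Ne.symm h2), lt_of_le_of_ne hb2 h3⟩
  exact Or.inr ⟨h3, ha1, ha2⟩

end BAIaux

namespace BAIaux

lemma isCompact_csq {a b lam : ℝ} (hl : 0 ≤ lam) : IsCompact (csq a b lam) := by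
  refine Metric.isCompact_of_isClosed_isBounded isClosed_csq ?_
  rw [Metric.isBounded_iff]
  refine ⟨2 * lam, ?_⟩
  rintro x ⟨⟨hx1, hx2⟩, hx3, hx4⟩ y ⟨⟨hy1, hy2⟩, hy3, hy4⟩
  rw [EuclideanSpace.dist_eq]
  have h0 : dist (x 0) (y 0) ^ 2 ≤ lam ^ 2 := by
    rw [Real.dist_eq, sq_abs]
    nlinarith
  have h1 : dist (x 1) (y 1) ^ 2 ≤ lam ^ 2 := by
    rw [Real.dist_eq, sq_abs]
    nlinarith
  calc Real.sqrt (∑ i, dist (x i) (y i) ^ 2) ≤ Real.sqrt ((2 * lam) ^ 2) := by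
        apply Real.sqrt_le_sqrt
        rw [Fin.sum_univ_two]
        nlinarith
  _ = 2 * lam := Real.sqrt_sq (by linarith)

lemma integrableOn_T {a b lam : ℝ} {T : Set E2} (hTm : MeasurableSet T)
    (hTf : μH[1] T ≠ ⊤) (hTb : T ⊆ csq a b lam) (h0lam : 0 ≤ lam)
    {g : E2 → ℝ} (hg : Continuous g) : IntegrableOn g T μH[1] := by
  obtain ⟨C, hC⟩ := (isCompact_csq h0lam).exists_bound_of_continuousOn hg.continuousOn
  haveI : IsFiniteMeasure ((μH[1] : Measure E2).restrict T) :=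
    ⟨by rwa [Measure.restrict_apply_univ, lt_top_iff_ne_top]⟩
  refine Integrable.mono' (integrable_const C) hg.aestronglyMeasurable.restrict ?_
  exact (ae_restrict_iff' hTm).2 (Filter.Eventually.of_forall fun x hx => hC x (hTb hx))

lemma two_sides_bound {T S S' : Set E2} {g : E2 → ℝ}
    (hgn : ∀ x, 0 ≤ g x) (hint : IntegrableOn g T μH[1])
    (hS : S ⊆ T) (hS' : S' ⊆ T) (hm : MeasurableSet S) (hm' : MeasurableSet S')
    (h0 : μH[1] (S ∩ S') = 0) :
    (∫ x in S, g x ∂μH[1]) + (∫ x in S', g x ∂μH[1]) ≤ ∫ x in T, g x ∂μH[1] := by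
  have hae : (S' \ S : Set E2) =ᵐ[(μH[1] : Measure E2)] S' := by
    rw [MeasureTheory.ae_eq_set]
    constructor
    · exact measure_mono_null (fun x hx => (hx.2 hx.1.1).elim) (measure_empty)
    · refine measure_mono_null ?_ h0
      intro x hx
      exact ⟨by_contra fun h => hx.2 ⟨hx.1, h⟩, hx.1⟩
  have key : ∫ x in S', g x ∂μH[1] = ∫ x in S' \ S, g x ∂μH[1] :=
    (setIntegral_congr_set hae).symm
  rw [key, ← setIntegral_union disjoint_sdiff_self_right (hm'.diff hm)
    (hint.mono_set hS) (hint.mono_set (Set.diff_subset.trans hS'))]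
  exact setIntegral_mono_set hint (Filter.Eventually.of_forall fun x => hgn x)
    (HasSubset.Subset.eventuallyLE (Set.union_subset hS (Set.diff_subset.trans hS')))


lemma sides_inter_null {a b lam : ℝ} (hl : 0 < lam) (i k : Fin 4) (hik : i ≠ k) :
    μH[1] (sqSide a b lam i ∩ sqSide a b lam k) = 0 := by
  fin_cases i <;> fin_cases k
  · exact absurd rfl hik
  · refine measure_mono_null (fun x hx => ?_) measure_empty
    obtain ⟨⟨h1, -⟩, h2, -⟩ := hx
    exact absurd (h1.symm.trans h2) (by intro h; linarith)
  · refine measure_mono_null (fun x hx => ?_) (null_singleton (pt (a) (b)))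
    obtain ⟨⟨h1, -⟩, h2, -⟩ := hx
    exact Set.mem_singleton_iff.2 (E2_ext (by rw [h1, pt_apply0]) (by rw [h2, pt_apply1]))
  · refine measure_mono_null (fun x hx => ?_) (null_singleton (pt (a) (b + lam)))
    obtain ⟨⟨h1, -⟩, h2, -⟩ := hx
    exact Set.mem_singleton_iff.2 (E2_ext (by rw [h1, pt_apply0]) (by rw [h2, pt_apply1]))
  · refine measure_mono_null (fun x hx => ?_) measure_empty
    obtain ⟨⟨h1, -⟩, h2, -⟩ := hx
    exact absurd (h1.symm.trans h2) (by intro h; linarith)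
  · exact absurd rfl hik
  · refine measure_mono_null (fun x hx => ?_) (null_singleton (pt (a + lam) (b)))
    obtain ⟨⟨h1, -⟩, h2, -⟩ := hx
    exact Set.mem_singleton_iff.2 (E2_ext (by rw [h1, pt_apply0]) (by rw [h2, pt_apply1]))
  · refine measure_mono_null (fun x hx => ?_) (null_singleton (pt (a + lam) (b + lam)))
    obtain ⟨⟨h1, -⟩, h2, -⟩ := hx
    exact Set.mem_singleton_iff.2 (E2_ext (by rw [h1, pt_apply0]) (by rw [h2, pt_apply1]))
  · refine measure_mono_null (fun x hx => ?_) (null_singleton (pt (a) (b)))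
    obtain ⟨⟨h1, -⟩, h2, -⟩ := hx
    exact Set.mem_singleton_iff.2 (E2_ext (by rw [h2, pt_apply0]) (by rw [h1, pt_apply1]))
  · refine measure_mono_null (fun x hx => ?_) (null_singleton (pt (a + lam) (b)))
    obtain ⟨⟨h1, -⟩, h2, -⟩ := hx
    exact Set.mem_singleton_iff.2 (E2_ext (by rw [h2, pt_apply0]) (by rw [h1, pt_apply1]))
  · exact absurd rfl hik
  · refine measure_mono_null (fun x hx => ?_) measure_empty
    obtain ⟨⟨h1, -⟩, h2, -⟩ := hx
    exact absurd (h1.symm.trans h2) (by intro h; linarith)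
  · refine measure_mono_null (fun x hx => ?_) (null_singleton (pt (a) (b + lam)))
    obtain ⟨⟨h1, -⟩, h2, -⟩ := hx
    exact Set.mem_singleton_iff.2 (E2_ext (by rw [h2, pt_apply0]) (by rw [h1, pt_apply1]))
  · refine measure_mono_null (fun x hx => ?_) (null_singleton (pt (a + lam) (b + lam)))
    obtain ⟨⟨h1, -⟩, h2, -⟩ := hx
    exact Set.mem_singleton_iff.2 (E2_ext (by rw [h2, pt_apply0]) (by rw [h1, pt_apply1]))
  · refine measure_mono_null (fun x hx => ?_) measure_empty
    obtain ⟨⟨h1, -⟩, h2, -⟩ := hx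
    exact absurd (h1.symm.trans h2) (by intro h; linarith)
  · exact absurd rfl hik

end BAIaux

namespace BAIaux

lemma mulV_add_smul (F : M2) (p e : E2) (t : ℝ) :
    mulV F (p + t • e) = mulV F p + t • mulV F e := by
  simp only [mulV_eq, map_add, _root_.map_smul]

lemma cont_g (F : M2) (av : E2) : Continuous (fun x : E2 => ‖x - mulV F x - av‖) :=
  (((continuous_id.sub (continuous_mulV F)).sub continuous_const)).norm

lemma meas_side (p e : E2) (he : ‖e‖ = 1) (lam : ℝ) :
    MeasurableSet (par p e '' Icc 0 lam) :=
  ((isCompact_Icc.image (isometry_par p e he).continuous).isClosed).measurableSet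

lemma side_integral (F : M2) (av p e : E2) (he : ‖e‖ = 1) (lam : ℝ) :
    ∫ x in par p e '' Icc 0 lam, ‖x - mulV F x - av‖ ∂μH[1]
      = ∫ t in Icc (0:ℝ) lam, ‖t • (e - mulV F e) + (p - mulV F p - av)‖ := by
  rw [integral_image _ (isometry_par p e he) _ (meas_side p e he lam) _ (cont_g F av)]
  apply setIntegral_congr_fun measurableSet_Icc
  intro t _
  simp only
  have h : par p e t - mulV F (par p e t) - av
      = t • (e - mulV F e) + (p - mulV F p - av) := by
    rw [par, mulV_add_smul]
    module
  rw [h]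

lemma fin_adj {T : Set E2} {F : M2} (av : E2) {α lam : ℝ} (hl : 0 < lam) (hα : 0 < α)
    (p q e f : E2) (he : ‖e‖ = 1) (hf : ‖f‖ = 1)
    (hC : α / 2 ≤ ‖e - mulV F e‖ + ‖f - mulV F f‖)
    (hint : IntegrableOn (fun x => ‖x - mulV F x - av‖) T μH[1])
    (hS : par p e '' Icc 0 lam ⊆ T) (hS' : par q f '' Icc 0 lam ⊆ T)
    (h0 : μH[1] (par p e '' Icc 0 lam ∩ par q f '' Icc 0 lam) = 0) :
    1/64 * α * lam ^ 2 ≤ ∫ x in T, ‖x - mulV F x - av‖ ∂μH[1] := by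
  have hb := two_sides_bound (fun x => norm_nonneg _) hint hS hS'
    (meas_side p e he lam) (meas_side q f hf lam) h0
  rw [side_integral F av p e he lam, side_integral F av q f hf lam] at hb
  have l1 := oneD_lower (e - mulV F e) (p - mulV F p - av) hl
  have l2 := oneD_lower (f - mulV F f) (q - mulV F q - av) hl
  have hmul := mul_le_mul_of_nonneg_left hC (by positivity : (0:ℝ) ≤ lam ^ 2 / 16)
  nlinarith [hb, l1, l2, hmul]

lemma fin_opp {T : Set E2} {F : M2} (av : E2) {α lam : ℝ} (hl : 0 < lam) (hα : 0 < α)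
    (p e f : E2) (he : ‖e‖ = 1) (hf : ‖f‖ = 1) (c : ℝ) (hc : |c| = lam)
    (hC : α / 2 ≤ ‖e - mulV F e‖ + ‖f - mulV F f‖)
    (hint : IntegrableOn (fun x => ‖x - mulV F x - av‖) T μH[1])
    (hS : par p e '' Icc 0 lam ⊆ T) (hS' : par (p + c • f) e '' Icc 0 lam ⊆ T)
    (h0 : μH[1] (par p e '' Icc 0 lam ∩ par (p + c • f) e '' Icc 0 lam) = 0) :
    1/64 * α * lam ^ 2 ≤ ∫ x in T, ‖x - mulV F x - av‖ ∂μH[1] := by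
  have hb := two_sides_bound (fun x => norm_nonneg _) hint hS hS'
    (meas_side p e he lam) (meas_side _ e he lam) h0
  rw [side_integral F av p e he lam, side_integral F av _ e he lam] at hb
  have l1 := oneD_lower (e - mulV F e) (p - mulV F p - av) hl
  have l2 := oneD_lower (e - mulV F e) (p + c • f - mulV F (p + c • f) - av) hl
  have lp := oneD_pair (e - mulV F e) (p - mulV F p - av)
    (p + c • f - mulV F (p + c • f) - av) hl
  have hw : (p - mulV F p - av) - (p + c • f - mulV F (p + c • f) - av)
      = (-c) • (f - mulV F f) := by
    rw [mulV_add_smul]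
    module
  rw [hw, norm_smul, Real.norm_eq_abs, abs_neg, hc] at lp
  have hmul := mul_le_mul_of_nonneg_left hC (by positivity : (0:ℝ) ≤ lam ^ 2 / 8)
  nlinarith [hb, l1, l2, lp, hmul, norm_nonneg (e - mulV F e), norm_nonneg (f - mulV F f),
    sq_nonneg lam, mul_pos hl hl]

end BAIaux
open BAIaux in
/-- Estimate (3.5): if the closed square `Q ⊆ Ω̄` of side `λ` has at least two
sides contained in `∂Ω`, then for every `F ∈ K_j` and `a ∈ ℝ²` one has
`c_*αλ² ≤ ∫_{∂Q∩∂Ω} |x - Fx - a| dH¹` (one may take `c_* = 1/16`). -/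
theorem boundary_affine_incompatibility :
    ∃ cstar : ℝ, 0 < cstar ∧
      ∀ L H α lam a b : ℝ, ∀ j : ℕ, 0 < L → 0 < H → α ∈ Ioo (0:ℝ) 1 →
        (j = 1 ∨ j = 2) → 0 < lam →
        csq a b lam ⊆ closure (Omg L H) →
        (∃ i k : Fin 4, i ≠ k ∧ sqSide a b lam i ⊆ frontier (Omg L H) ∧
          sqSide a b lam k ⊆ frontier (Omg L H)) →
        ∀ F ∈ Kj j α, ∀ av : E2,
          cstar * α * lam ^ 2 ≤
            ∫ x in frontier (csq a b lam) ∩ frontier (Omg L H),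
              ‖x - mulV F x - av‖ ∂(μH[1]) := by
  classical
  refine ⟨1/64, by norm_num, ?_⟩
  intro L H α lam a b j hL hH hα hj hlam hsub hsides F hF av
  obtain ⟨i, k, hik, hi, hk⟩ := hsides
  have hC := lemC hα hj hF
  set T := frontier (csq a b lam) ∩ frontier (Omg L H) with hTdef
  have hTm : MeasurableSet T :=
    isClosed_frontier.measurableSet.inter isClosed_frontier.measurableSet
  have hTsub : T ⊆ csq a b lam := fun x hx =>
    isClosed_csq.closure_eq ▸ frontier_subset_closure hx.1
  have hside : ∀ m : Fin 4, μH[1] (sqSide a b lam m) = ENNReal.ofReal lam := by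
    intro m
    rw [side_eq a b lam m, measure_image _ (isometry_par _ _ (norm_dir m)),
      Real.volume_Icc, sub_zero]
  have hTfin : μH[1] T ≠ ⊤ := by
    have n : ∀ m : Fin 4, μH[1] (sqSide a b lam m) < ⊤ := fun m => by
      rw [hside m]; exact ENNReal.ofReal_lt_top
    have h4 : μH[1] (sqSide a b lam 0 ∪ sqSide a b lam 1 ∪ sqSide a b lam 2
        ∪ sqSide a b lam 3) < ⊤ :=
      measure_union_lt_top (measure_union_lt_top (measure_union_lt_top (n 0) (n 1)) (n 2)) (n 3)
    exact (lt_of_le_of_lt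
      (measure_mono (Set.inter_subset_left.trans frontier_csq_subset)) h4).ne
  have hint : IntegrableOn (fun x => ‖x - mulV F x - av‖) T μH[1] :=
    integrableOn_T hTm hTfin hTsub hlam.le (cont_g F av)
  have hsubT : ∀ m : Fin 4, sqSide a b lam m ⊆ frontier (Omg L H) →
      sqSide a b lam m ⊆ T := fun m hm =>
    Set.subset_inter (side_subset_frontier hlam m) hm
  fin_cases i <;> fin_cases k
  · exact absurd rfl hik
  · have ei := side_eq a b lam 0
    have ek := side_eq a b lam 1
    simp only [basept, dir] at ei ek
    have hq : pt a b + (lam) • e0 = pt (a + lam) b :=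
      E2_ext (by simp only [add_apply, smul_apply, pt_apply0, e0c0, e1c0]; ring)
        (by simp only [add_apply, smul_apply, pt_apply1, e0c1, e1c1]; ring)
    exact fin_opp av hlam hα.1 (pt a b) e1 e0 norm_e1 norm_e0 (lam) (abs_of_pos hlam)
      (by linarith [hC]) hint (by rw [← ei]; exact hsubT 0 hi)
      (by rw [hq, ← ek]; exact hsubT 1 hk)
      (by rw [hq, ← ei, ← ek]; exact sides_inter_null hlam 0 1 (by decide))
  · have ei := side_eq a b lam 0
    have ek := side_eq a b lam 2
    simp only [basept, dir] at ei ek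
    exact fin_adj av hlam hα.1 (pt a b) (pt a b) e1 e0 norm_e1 norm_e0
      (by linarith [hC]) hint (by rw [← ei]; exact hsubT 0 hi)
      (by rw [← ek]; exact hsubT 2 hk)
      (by rw [← ei, ← ek]; exact sides_inter_null hlam 0 2 (by decide))
  · have ei := side_eq a b lam 0
    have ek := side_eq a b lam 3
    simp only [basept, dir] at ei ek
    exact fin_adj av hlam hα.1 (pt a b) (pt a (b + lam)) e1 e0 norm_e1 norm_e0
      (by linarith [hC]) hint (by rw [← ei]; exact hsubT 0 hi)
      (by rw [← ek]; exact hsubT 3 hk)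
      (by rw [← ei, ← ek]; exact sides_inter_null hlam 0 3 (by decide))
  · have ei := side_eq a b lam 1
    have ek := side_eq a b lam 0
    simp only [basept, dir] at ei ek
    have hq : pt (a + lam) b + (-lam) • e0 = pt a b :=
      E2_ext (by simp only [add_apply, smul_apply, pt_apply0, e0c0, e1c0]; ring)
        (by simp only [add_apply, smul_apply, pt_apply1, e0c1, e1c1]; ring)
    exact fin_opp av hlam hα.1 (pt (a + lam) b) e1 e0 norm_e1 norm_e0 (-lam) (by rw [abs_neg]; exact abs_of_pos hlam)
      (by linarith [hC]) hint (by rw [← ei]; exact hsubT 1 hi)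
      (by rw [hq, ← ek]; exact hsubT 0 hk)
      (by rw [hq, ← ei, ← ek]; exact sides_inter_null hlam 1 0 (by decide))
  · exact absurd rfl hik
  · have ei := side_eq a b lam 1
    have ek := side_eq a b lam 2
    simp only [basept, dir] at ei ek
    exact fin_adj av hlam hα.1 (pt (a + lam) b) (pt a b) e1 e0 norm_e1 norm_e0
      (by linarith [hC]) hint (by rw [← ei]; exact hsubT 1 hi)
      (by rw [← ek]; exact hsubT 2 hk)
      (by rw [← ei, ← ek]; exact sides_inter_null hlam 1 2 (by decide))
  · have ei := side_eq a b lam 1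
    have ek := side_eq a b lam 3
    simp only [basept, dir] at ei ek
    exact fin_adj av hlam hα.1 (pt (a + lam) b) (pt a (b + lam)) e1 e0 norm_e1 norm_e0
      (by linarith [hC]) hint (by rw [← ei]; exact hsubT 1 hi)
      (by rw [← ek]; exact hsubT 3 hk)
      (by rw [← ei, ← ek]; exact sides_inter_null hlam 1 3 (by decide))
  · have ei := side_eq a b lam 2
    have ek := side_eq a b lam 0
    simp only [basept, dir] at ei ek
    exact fin_adj av hlam hα.1 (pt a b) (pt a b) e0 e1 norm_e0 norm_e1
      (by linarith [hC]) hint (by rw [← ei]; exact hsubT 2 hi)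
      (by rw [← ek]; exact hsubT 0 hk)
      (by rw [← ei, ← ek]; exact sides_inter_null hlam 2 0 (by decide))
  · have ei := side_eq a b lam 2
    have ek := side_eq a b lam 1
    simp only [basept, dir] at ei ek
    exact fin_adj av hlam hα.1 (pt a b) (pt (a + lam) b) e0 e1 norm_e0 norm_e1
      (by linarith [hC]) hint (by rw [← ei]; exact hsubT 2 hi)
      (by rw [← ek]; exact hsubT 1 hk)
      (by rw [← ei, ← ek]; exact sides_inter_null hlam 2 1 (by decide))
  · exact absurd rfl hik
  · have ei := side_eq a b lam 2
    have ek := side_eq a b lam 3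
    simp only [basept, dir] at ei ek
    have hq : pt a b + (lam) • e1 = pt a (b + lam) :=
      E2_ext (by simp only [add_apply, smul_apply, pt_apply0, e0c0, e1c0]; ring)
        (by simp only [add_apply, smul_apply, pt_apply1, e0c1, e1c1]; ring)
    exact fin_opp av hlam hα.1 (pt a b) e0 e1 norm_e0 norm_e1 (lam) (abs_of_pos hlam)
      (by linarith [hC]) hint (by rw [← ei]; exact hsubT 2 hi)
      (by rw [hq, ← ek]; exact hsubT 3 hk)
      (by rw [hq, ← ei, ← ek]; exact sides_inter_null hlam 2 3 (by decide))
  · have ei := side_eq a b lam 3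
    have ek := side_eq a b lam 0
    simp only [basept, dir] at ei ek
    exact fin_adj av hlam hα.1 (pt a (b + lam)) (pt a b) e0 e1 norm_e0 norm_e1
      (by linarith [hC]) hint (by rw [← ei]; exact hsubT 3 hi)
      (by rw [← ek]; exact hsubT 0 hk)
      (by rw [← ei, ← ek]; exact sides_inter_null hlam 3 0 (by decide))
  · have ei := side_eq a b lam 3
    have ek := side_eq a b lam 1
    simp only [basept, dir] at ei ek
    exact fin_adj av hlam hα.1 (pt a (b + lam)) (pt (a + lam) b) e0 e1 norm_e0 norm_e1
      (by linarith [hC]) hint (by rw [← ei]; exact hsubT 3 hi)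
      (by rw [← ek]; exact hsubT 1 hk)
      (by rw [← ei, ← ek]; exact sides_inter_null hlam 3 1 (by decide))
  · have ei := side_eq a b lam 3
    have ek := side_eq a b lam 2
    simp only [basept, dir] at ei ek
    have hq : pt a (b + lam) + (-lam) • e1 = pt a b :=
      E2_ext (by simp only [add_apply, smul_apply, pt_apply0, e0c0, e1c0]; ring)
        (by simp only [add_apply, smul_apply, pt_apply1, e0c1, e1c1]; ring)
    exact fin_opp av hlam hα.1 (pt a (b + lam)) e0 e1 norm_e0 norm_e1 (-lam) (by rw [abs_neg]; exact abs_of_pos hlam)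
      (by linarith [hC]) hint (by rw [← ei]; exact hsubT 3 hi)
      (by rw [hq, ← ek]; exact hsubT 2 hk)
      (by rw [hq, ← ei, ← ek]; exact sides_inter_null hlam 3 2 (by decide))
  · exact absurd rfl hik
end
end

section
/- There is a universal constant c_*>0 with the following property. Let α∈(0,1), λ>0, s,s'∈ℝ, and Q = (s',s'+λ)×(s,s+λ). Let F∈K₁ and a∈ℝ². If |F₂₁| < α/2, then c_*·α·λ³ ≤ ∫_Q |(x − Fx − a)·e₁| dx; if |F₂₁| ≥ α/2, then c_*·α·λ³ ≤ ∫_Q |(x − Fx − a)·e₂| dx. -/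
/-!
Formalization framework for "Energy scaling and branched microstructures in a
model for shape-memory alloys with SO(2) invariance" (Chan–Conti).

Deformations are maps `u : ℝ² → ℝ²` (with `ℝ²` the Euclidean plane).  The
gradient `Du` is the 2×2 matrix of partial derivatives, matrices carry the
Frobenius norm, and the total variation `|D²u|(ω)` of the (matrix-valued)
gradient is defined by duality against C¹ compactly supported test fields.
The admissible class consists of (Lipschitz) deformations whose gradient has
bounded variation and which agree with the identity on `∂Ω`.
-/

open MeasureTheory Set Metric Topology

noncomputable section

attribute [local instance] Matrix.frobeniusNormedAddCommGroup

/-! ### Auxiliary lemmas for `affine_boundary_incompatibility_cases` -/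

private lemma abi_lemA (q r s lam : ℝ) (hlam : 0 < lam) :
    |q| * lam ^ 2 / 4 ≤ ∫ t in Ioo s (s + lam), |q * t + r| := by
  have hle : s ≤ s + lam := by linarith
  rw [← MeasureTheory.integral_Ioc_eq_integral_Ioo, ← intervalIntegral.integral_of_le hle]
  set m : ℝ := s + lam / 2 with hm
  have hc1 : Continuous fun t : ℝ => |q * t + r| := by continuity
  have hc2 : Continuous fun t : ℝ => |q * (2 * m - t) + r| := by continuity
  have hc3 : Continuous fun t : ℝ => 2 * |q| * |t - m| := by continuity
  have hrefl : (∫ t in s..(s + lam), |q * (2 * m - t) + r|)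
      = ∫ t in s..(s + lam), |q * t + r| := by
    have h := intervalIntegral.integral_comp_sub_left (a := s) (b := s + lam)
      (fun t => |q * t + r|) (2 * m)
    rw [h]
    congr 1 <;> simp [hm] <;> ring
  have hmono : (∫ t in s..(s + lam), 2 * |q| * |t - m|)
      ≤ ∫ t in s..(s + lam), (|q * t + r| + |q * (2 * m - t) + r|) := by
    apply intervalIntegral.integral_mono_on hle
      (hc3.intervalIntegrable _ _) ((hc1.add hc2).intervalIntegrable _ _)
    intro t _
    have key : q * t + r - (q * (2 * m - t) + r) = q * (2 * (t - m)) := by ring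
    have h1 : 2 * |q| * |t - m| = |q * t + r - (q * (2 * m - t) + r)| := by
      rw [key, abs_mul, abs_mul]
      simp [abs_of_nonneg]
      ring
    rw [h1]
    exact abs_sub _ _
  have hsplit : (∫ t in s..(s + lam), (|q * t + r| + |q * (2 * m - t) + r|))
      = 2 * ∫ t in s..(s + lam), |q * t + r| := by
    rw [intervalIntegral.integral_add (hc1.intervalIntegrable _ _)
      (hc2.intervalIntegrable _ _), hrefl]
    ring
  have habs : (∫ t in s..(s + lam), |t - m|) = lam ^ 2 / 4 := by
    rw [intervalIntegral.integral_comp_sub_right (fun u => |u|) m]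
    have e1 : s - m = -(lam / 2) := by rw [hm]; ring
    have e2 : s + lam - m = lam / 2 := by rw [hm]; ring
    rw [e1, e2]
    have h0 : (∫ u in (-(lam / 2))..(0:ℝ), |u|) = lam ^ 2 / 8 := by
      have : ∀ u ∈ Set.uIcc (-(lam / 2)) (0:ℝ), |u| = -u := by
        intro u hu
        rw [Set.uIcc_of_le (by linarith)] at hu
        exact abs_of_nonpos hu.2
      rw [intervalIntegral.integral_congr this]
      rw [intervalIntegral.integral_neg, integral_id]
      ring
    have h1 : (∫ u in (0:ℝ)..(lam / 2), |u|) = lam ^ 2 / 8 := by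
      have : ∀ u ∈ Set.uIcc (0:ℝ) (lam / 2), |u| = u := by
        intro u hu
        rw [Set.uIcc_of_le (by linarith)] at hu
        exact abs_of_nonneg hu.1
      rw [intervalIntegral.integral_congr this, integral_id]
      ring
    have := intervalIntegral.integral_add_adjacent_intervals (μ := volume)
      ((continuous_abs).intervalIntegrable (-(lam / 2)) (0:ℝ))
      ((continuous_abs).intervalIntegrable (0:ℝ) (lam / 2))
    rw [← this, h0, h1]; ring
  have hconst : (∫ t in s..(s + lam), 2 * |q| * |t - m|) = 2 * |q| * (lam ^ 2 / 4) := by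
    rw [intervalIntegral.integral_const_mul, habs]
  nlinarith [hmono, hsplit, hconst]

private lemma abi_lemB (p q r s s' lam : ℝ) (hlam : 0 < lam) :
    |q| * lam ^ 3 / 4 ≤
      ∫ z in (Ioo s' (s' + lam)) ×ˢ (Ioo s (s + lam)), |p * z.1 + q * z.2 + r| := by
  have hcont : Continuous fun z : ℝ × ℝ => |p * z.1 + q * z.2 + r| := by continuity
  have hint : IntegrableOn (fun z : ℝ × ℝ => |p * z.1 + q * z.2 + r|)
      ((Ioo s' (s' + lam)) ×ˢ (Ioo s (s + lam))) volume := by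
    apply (hcont.continuousOn.integrableOn_compact
      (isCompact_Icc.prod (isCompact_Icc (a := s) (b := s + lam)))).mono_set
    exact Set.prod_mono Ioo_subset_Icc_self Ioo_subset_Icc_self
  have hint' : Integrable (fun z : ℝ × ℝ => |p * z.1 + q * z.2 + r|)
      ((volume.restrict (Ioo s' (s' + lam))).prod (volume.restrict (Ioo s (s + lam)))) := by
    rw [Measure.prod_restrict]
    exact hint
  have hprod : (∫ z in (Ioo s' (s' + lam)) ×ˢ (Ioo s (s + lam)), |p * z.1 + q * z.2 + r|)
      = ∫ x in Ioo s' (s' + lam), ∫ y in Ioo s (s + lam), |p * x + q * y + r| := by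
    rw [MeasureTheory.Measure.volume_eq_prod]
    exact MeasureTheory.setIntegral_prod _
      (by rwa [MeasureTheory.Measure.volume_eq_prod] at hint)
  rw [hprod]
  have key : ∀ x : ℝ, |q| * lam ^ 2 / 4 ≤ ∫ y in Ioo s (s + lam), |p * x + q * y + r| := by
    intro x
    have h := abi_lemA q (p * x + r) s lam hlam
    have heq : (fun y => |q * y + (p * x + r)|) = fun y => |p * x + q * y + r| := by
      funext y; exact congrArg abs (by ring)
    rwa [heq] at h
  have hgint : IntegrableOn (fun x => ∫ y in Ioo s (s + lam), |p * x + q * y + r|)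
      (Ioo s' (s' + lam)) volume := hint'.integral_prod_left
  have hconst : (∫ _x in Ioo s' (s' + lam), (|q| * lam ^ 2 / 4))
      = |q| * lam ^ 2 / 4 * lam := by
    rw [setIntegral_const, Real.volume_real_Ioo_of_le (by linarith), smul_eq_mul]
    rw [show s' + lam - s' = lam by ring]
    ring
  have hmono : (∫ _x in Ioo s' (s' + lam), (|q| * lam ^ 2 / 4))
      ≤ ∫ x in Ioo s' (s' + lam), ∫ y in Ioo s (s + lam), |p * x + q * y + r| := by
    apply setIntegral_mono_on (integrableOn_const measure_Ioo_lt_top.ne) hgint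
      measurableSet_Ioo
    intro x _
    exact key x
  calc |q| * lam ^ 3 / 4 = |q| * lam ^ 2 / 4 * lam := by ring
    _ = ∫ _x in Ioo s' (s' + lam), (|q| * lam ^ 2 / 4) := hconst.symm
    _ ≤ _ := hmono

private lemma abi_transfer1 (g : ℝ × ℝ → ℝ) (s s' lam : ℝ) :
    (∫ x in rect s' lam s lam, g (x 0, x 1)) =
      ∫ z in (Ioo s' (s' + lam)) ×ˢ (Ioo s (s + lam)), g z := by
  set e := (MeasurableEquiv.toLp 2 (Fin 2 → ℝ)).symm.trans (MeasurableEquiv.finTwoArrow) with he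
  have hmp : MeasurePreserving e volume volume :=
    (volume_preserving_finTwoArrow ℝ).comp
      (EuclideanSpace.volume_preserving_symm_measurableEquiv_toLp (Fin 2))
  have h := hmp.setIntegral_preimage_emb e.measurableEmbedding g
    ((Ioo s' (s' + lam)) ×ˢ (Ioo s (s + lam)))
  rw [← h]
  have hset : e ⁻¹' ((Ioo s' (s' + lam)) ×ˢ (Ioo s (s + lam))) = rect s' lam s lam := by
    ext x
    simp [he, rect, MeasurableEquiv.finTwoArrow, MeasurableEquiv.toLp,
      Set.mem_prod, MeasurableEquiv.trans_apply]
    exact Iff.rfl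
  rw [hset]
  rfl

private lemma abi_transfer2 (g : ℝ × ℝ → ℝ) (s s' lam : ℝ) :
    (∫ x in rect s' lam s lam, g (x 1, x 0)) =
      ∫ z in (Ioo s (s + lam)) ×ˢ (Ioo s' (s' + lam)), g z := by
  set e := ((MeasurableEquiv.toLp 2 (Fin 2 → ℝ)).symm.trans
    (MeasurableEquiv.finTwoArrow)).trans
      (MeasurableEquiv.prodComm : ℝ × ℝ ≃ᵐ ℝ × ℝ) with he
  have hswap : MeasurePreserving
      ((MeasurableEquiv.prodComm : ℝ × ℝ ≃ᵐ ℝ × ℝ)) volume volume := by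
    rw [MeasureTheory.Measure.volume_eq_prod]
    exact MeasureTheory.Measure.measurePreserving_swap
  have hmp : MeasurePreserving e volume volume :=
    hswap.comp ((volume_preserving_finTwoArrow ℝ).comp
      (EuclideanSpace.volume_preserving_symm_measurableEquiv_toLp (Fin 2)))
  have h := hmp.setIntegral_preimage_emb e.measurableEmbedding g
    ((Ioo s (s + lam)) ×ˢ (Ioo s' (s' + lam)))
  rw [← h]
  have hset : e ⁻¹' ((Ioo s (s + lam)) ×ˢ (Ioo s' (s' + lam))) = rect s' lam s lam := by
    ext x
    simp [he, rect, MeasurableEquiv.finTwoArrow, MeasurableEquiv.toLp,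
      MeasurableEquiv.prodComm, Set.mem_prod, MeasurableEquiv.trans_apply]
    constructor
    · rintro ⟨h1, h2⟩; exact ⟨h2, h1⟩
    · rintro ⟨h1, h2⟩; exact ⟨h2, h1⟩
  rw [hset]
  rfl

/-- Estimate (3.14): for `Q = (s',s'+λ)×(s,s+λ)`, `F ∈ K₁` and `a ∈ ℝ²`, if
`|F₂₁| < α/2` then `c_*αλ³ ≤ ∫_Q |(x - Fx - a)·e₁|`, and if `|F₂₁| ≥ α/2` then
`c_*αλ³ ≤ ∫_Q |(x - Fx - a)·e₂|`. -/
theorem affine_boundary_incompatibility_cases :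
    ∃ cstar : ℝ, 0 < cstar ∧
      ∀ α lam s s' : ℝ, α ∈ Ioo (0:ℝ) 1 → 0 < lam →
        ∀ F ∈ K1 α, ∀ a : E2,
          (|F 1 0| < α / 2 →
            cstar * α * lam ^ 3 ≤ ∫ x in rect s' lam s lam, |x 0 - mulV F x 0 - a 0|) ∧
          (α / 2 ≤ |F 1 0| →
            cstar * α * lam ^ 3 ≤ ∫ x in rect s' lam s lam, |x 1 - mulV F x 1 - a 1|) := by
  refine ⟨1/12, by norm_num, ?_⟩
  intro α lam s s' hα hlam F hF av
  obtain ⟨hα0, hα1⟩ := hα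
  -- decompose `F = R * !![1, β; 0, 1]` with `R ∈ SO2`, `|β| = α`
  obtain ⟨R, hR, β, hβ, rfl⟩ :
      ∃ R, R ∈ SO2 ∧ ∃ β : ℝ, |β| = α ∧ F = R * !![1, β; 0, 1] := by
    rcases hF with ⟨R, hR, hFR⟩ | ⟨R, hR, hFR⟩
    · exact ⟨R, hR, -α, by rw [abs_neg, abs_of_pos hα0], hFR.symm⟩
    · exact ⟨R, hR, α, abs_of_pos hα0, hFR.symm⟩
  set F := R * !![1, β; 0, 1] with hFdef
  -- entries of F
  have hF00 : F 0 0 = R 0 0 := by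
    simp [hFdef, Matrix.mul_apply, Fin.sum_univ_two]
  have hF01 : F 0 1 = R 0 0 * β + R 0 1 := by
    simp [hFdef, Matrix.mul_apply, Fin.sum_univ_two]
  have hF10 : F 1 0 = R 1 0 := by
    simp [hFdef, Matrix.mul_apply, Fin.sum_univ_two]
  have hF11 : F 1 1 = R 1 0 * β + R 1 1 := by
    simp [hFdef, Matrix.mul_apply, Fin.sum_univ_two]
  -- relations among entries of R
  have hent := fun i j => congrArg (fun M : M2 => M i j) hR.1
  have e00 : R 0 0 * R 0 0 + R 0 1 * R 0 1 = 1 := by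
    have h := hent 0 0
    simpa [Matrix.mul_apply, Fin.sum_univ_two, Matrix.transpose_apply,
      Matrix.one_apply] using h
  have e01 : R 0 0 * R 1 0 + R 0 1 * R 1 1 = 0 := by
    have h := hent 0 1
    simpa [Matrix.mul_apply, Fin.sum_univ_two, Matrix.transpose_apply,
      Matrix.one_apply] using h
  have edet : R 0 0 * R 1 1 - R 0 1 * R 1 0 = 1 := by
    have h := hR.2
    rwa [Matrix.det_fin_two] at h
  have hcb : R 1 0 = -R 0 1 := by
    linear_combination R 0 0 * e01 - R 0 1 * edet - R 1 0 * e00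
  -- how `mulV F` looks in coordinates
  have hmv : ∀ (x : E2) (i : Fin 2), mulV F x i = F i 0 * x 0 + F i 1 * x 1 := by
    intro x i
    simp [mulV, toE2, Matrix.mulVec, dotProduct, Fin.sum_univ_two]
    fin_cases i <;> rfl
  constructor
  · -- Case 1: |F 1 0| < α / 2
    intro hsmall
    have hb : |R 0 1| < α / 2 := by
      rw [hF10, hcb, abs_neg] at hsmall
      exact hsmall
    -- lower bound for the coefficient q = -(R 0 0 * β + R 0 1)
    have hb2 : (R 0 1) ^ 2 < α ^ 2 / 4 := by
      nlinarith [abs_nonneg (R 0 1), sq_abs (R 0 1)]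
    have ha2 : (5/6 : ℝ) ^ 2 ≤ (R 0 0) ^ 2 := by nlinarith
    have ha : (5/6 : ℝ) ≤ |R 0 0| := by
      nlinarith [abs_nonneg (R 0 0), sq_abs (R 0 0)]
    have htri : |R 0 0 * β| - |R 0 1| ≤ |R 0 0 * β + R 0 1| := by
      have h := abs_sub_abs_le_abs_sub (R 0 0 * β) (-(R 0 1))
      simpa [sub_neg_eq_add] using h
    have habsm : |R 0 0 * β| = |R 0 0| * α := by rw [abs_mul, hβ]
    have hq : α / 3 ≤ |-(R 0 0 * β + R 0 1)| := by
      rw [abs_neg]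
      nlinarith
    -- rewrite the integrand and conclude
    have heq : ∀ x : E2, |x 0 - mulV F x 0 - av 0| =
        (fun z : ℝ × ℝ => |(1 - R 0 0) * z.1 +
          (-(R 0 0 * β + R 0 1)) * z.2 + (-(av 0))|) (x 0, x 1) := by
      intro x
      rw [hmv x 0, hF00, hF01]
      exact congrArg abs (by ring)
    have hieq : (∫ x in rect s' lam s lam, |x 0 - mulV F x 0 - av 0|) =
        ∫ x in rect s' lam s lam, |(1 - R 0 0) * x 0 +
          (-(R 0 0 * β + R 0 1)) * x 1 + (-(av 0))| :=
      MeasureTheory.integral_congr_ae (Filter.Eventually.of_forall fun x => heq x)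
    rw [hieq, abi_transfer1 (fun z : ℝ × ℝ => |(1 - R 0 0) * z.1 +
      (-(R 0 0 * β + R 0 1)) * z.2 + (-(av 0))|) s s' lam]
    refine le_trans ?_ (abi_lemB (1 - R 0 0) (-(R 0 0 * β + R 0 1)) (-(av 0)) s s' lam hlam)
    have h2 := mul_le_mul_of_nonneg_right hq (pow_pos hlam 3).le
    linarith
  · -- Case 2: α / 2 ≤ |F 1 0|
    intro hbig
    rw [hF10] at hbig
    have hq : α / 2 ≤ |-R 1 0| := by rwa [abs_neg]
    have heq : ∀ x : E2, |x 1 - mulV F x 1 - av 1| =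
        (fun z : ℝ × ℝ => |(1 - (R 1 0 * β + R 1 1)) * z.1 +
          (-R 1 0) * z.2 + (-(av 1))|) (x 1, x 0) := by
      intro x
      rw [hmv x 1, hF10, hF11]
      exact congrArg abs (by ring)
    have hieq : (∫ x in rect s' lam s lam, |x 1 - mulV F x 1 - av 1|) =
        ∫ x in rect s' lam s lam, |(1 - (R 1 0 * β + R 1 1)) * x 1 +
          (-R 1 0) * x 0 + (-(av 1))| :=
      MeasureTheory.integral_congr_ae (Filter.Eventually.of_forall fun x => heq x)
    rw [hieq, abi_transfer2 (fun z : ℝ × ℝ => |(1 - (R 1 0 * β + R 1 1)) * z.1 +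
      (-R 1 0) * z.2 + (-(av 1))|) s s' lam]
    refine le_trans ?_
      (abi_lemB (1 - (R 1 0 * β + R 1 1)) (-R 1 0) (-(av 1)) s' s lam hlam)
    have h1 : α / 3 ≤ |(-R 1 0)| := le_trans (by linarith) hq
    have h2 := mul_le_mul_of_nonneg_right h1 (pow_pos hlam 3).le
    linarith
end
end
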